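/- arXiv:1304.0201 — 6 statements merged into one kernel-verified Lean document; each statement's English description precedes it below -/
import Mathlib

section
/- Let $F$ be an ordered field with canonical (natural) valuation $v$, and let $D, E \subseteq F$ with $D$ an initial segment of $F$ or $E$ a final segment of $F$. Then the set $v(E-D) := \{v(e-d) : e \in E, d \in D\}$ is an initial segment of $vF \cup \{\infty\}$. -/
open Set

section Val
variable {F : Type*} [Field F] [LinearOrder F] [IsStrictOrderedRing F]

/-- `vle a b` encodes `v a ≤ v b` for the canonical (natural) valuation `v` of the ordered
field `F` (whose valuation ring is the convex hull of `ℤ`): the valuation of `a` is at most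
that of `b` iff `|b|` is bounded by an integer multiple of `|a|`.  (`v 0 = ∞` is the largest
value.) -/
def vle (a b : F) : Prop := ∃ n : ℕ, |b| ≤ (n : F) * |a|

/-- `veq a b` encodes `v a = v b`. -/
def veq (a b : F) : Prop := vle a b ∧ vle b a

/-- `vlt a b` encodes `v a < v b`. -/
def vlt (a b : F) : Prop := vle a b ∧ ¬ vle b a

/-- A subset `S ⊆ F` encoding a final segment `S'` of the value group `vF` together with `∞`:
`S = {x | v x ∈ S' ∪ {∞}}`.  Equivalently: `0 ∈ S` and `S` is closed under increasing the
valuation. -/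
def IsValFinalSegment (S : Set F) : Prop :=
  (0 : F) ∈ S ∧ ∀ x ∈ S, ∀ y : F, vle x y → y ∈ S

/-- The ball `B_S(a,F) = {b | v(a-b) ∈ S ∪ {∞}}`, where the final segment `S ∪ {∞}` of
`vF ∪ {∞}` is encoded as a subset of `F` as in `IsValFinalSegment`. -/
def vball (S : Set F) (a : F) : Set F := {b | a - b ∈ S}

/-- A ball in `F` with respect to the canonical valuation. -/
def IsBall (B : Set F) : Prop := ∃ (a : F) (S : Set F), IsValFinalSegment S ∧ B = vball S a

end Val

/-- if `D` is an initial segment of `F` or `E` is a final segment of `F`, then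
`v(E - D) = {v(e - d) : e ∈ E, d ∈ D}` is an initial segment of `vF ∪ {∞}`: together with any
value `v(e-d)` it contains every value `v x ≤ v(e-d)` that is attained in `F`. -/
theorem vSub_isInitialSegment {F : Type*} [Field F] [LinearOrder F] [IsStrictOrderedRing F] (D E : Set F)
    (h : IsLowerSet D ∨ IsUpperSet E) :
    ∀ e ∈ E, ∀ d ∈ D, ∀ x : F, vle x (e - d) →
      ∃ e' ∈ E, ∃ d' ∈ D, veq (e' - d') x := by
  rintro e he d hd x ⟨n, hn⟩
  rcases h with hD | hE
  · refine ⟨e, he, min d e - |x|,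
      hD ((sub_le_self _ (abs_nonneg x)).trans (min_le_left d e)) hd, ?_, ?_⟩
    · refine ⟨1, ?_⟩
      have h1 : |x| ≤ e - (min d e - |x|) := by
        have := min_le_right d e; linarith
      rw [Nat.cast_one, one_mul, abs_of_nonneg (show (0:F) ≤ e - (min d e - |x|) by linarith [abs_nonneg x])]
      exact h1
    · refine ⟨n + 1, ?_⟩
      have h1 : e - min d e ≤ |e - d| := by
        rcases le_total d e with h' | h'
        · rw [min_eq_left h']; exact le_abs_self _
        · rw [min_eq_right h']; simp only [sub_self]; exact abs_nonneg (e - d)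
      have h2 : (0:F) ≤ e - min d e := by linarith [min_le_right d e]
      rw [abs_of_nonneg (by linarith [abs_nonneg x])]
      push_cast
      nlinarith [abs_nonneg x]
  · refine ⟨max e d + |x|, hE ((le_max_left e d).trans (le_add_of_nonneg_right (abs_nonneg x))) he,
      d, hd, ?_, ?_⟩
    · refine ⟨1, ?_⟩
      have h1 : |x| ≤ max e d + |x| - d := by
        have := le_max_right e d; linarith
      rw [Nat.cast_one, one_mul, abs_of_nonneg (show (0:F) ≤ max e d + |x| - d by linarith [abs_nonneg x])]
      exact h1
    · refine ⟨n + 1, ?_⟩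
      have h1 : max e d - d ≤ |e - d| := by
        rcases le_total d e with h' | h'
        · rw [max_eq_left h']; exact le_abs_self _
        · rw [max_eq_right h']; simp only [sub_self]; exact abs_nonneg (e - d)
      have h2 : (0:F) ≤ max e d - d := by linarith [le_max_right e d]
      rw [show max e d + |x| - d = max e d - d + |x| by ring,
        abs_of_nonneg (by linarith [abs_nonneg x])]
      push_cast
      nlinarith [abs_nonneg x]
end

section
/- Let $F$ be an ordered field with canonical valuation $v$, let $S$ be a final segment of the value group $vF$, let $a \in F$, and let $B = B_S(a,F) = \{b \in F : v(a-b) \in S \cup \{\infty\}\}$. If $(D,E)$ is a ball complement for $B$ (i.e., $D < B < E$ and $F = D \cup B \cup E$), then $v(E-D) = v(E-B) = v(B-D) = vF \setminus S$. -/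
open Set

section Aux
variable {F : Type*} [Field F] [LinearOrder F] [IsStrictOrderedRing F]

lemma vle_of_abs_le' {x y : F} (h : |y| ≤ |x|) : vle x y :=
  ⟨1, by simpa using h⟩

lemma mem_of_abs_le' {S : Set F} (hS : IsValFinalSegment S) {x y : F} (hx : x ∈ S)
    (h : |y| ≤ |x|) : y ∈ S := hS.2 x hx y (vle_of_abs_le' h)

lemma S_add' {S : Set F} (hS : IsValFinalSegment S) {s t : F} (hs : s ∈ S) (ht : t ∈ S) :
    s + t ∈ S := by
  rcases le_total |s| |t| with h | h
  · refine hS.2 t ht _ ⟨2, ?_⟩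
    have := abs_add_le s t
    push_cast
    nlinarith
  · refine hS.2 s hs _ ⟨2, ?_⟩
    have := abs_add_le s t
    push_cast
    nlinarith

lemma S_neg' {S : Set F} (hS : IsValFinalSegment S) {s : F} (hs : s ∈ S) : -s ∈ S :=
  mem_of_abs_le' hS hs (by simp)

lemma veq_abs' (x : F) : veq |x| x :=
  ⟨vle_of_abs_le' (by simp), vle_of_abs_le' (by simp)⟩

end Aux

/-- if `(D,E)` is a ball complement for the ball `B = B_S(a,F)`, then
`v(E-D) = v(E-B) = v(B-D) = vF \\ S`.  Each of the three set equalities is expressed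
elementwise: differences have value outside `S` (and are nonzero, i.e. have value `≠ ∞`),
and every nonzero `x` with `v x ∉ S` has the same value as some difference. -/
theorem ballComplement_values {F : Type*} [Field F] [LinearOrder F] [IsStrictOrderedRing F] (S : Set F)
    (hS : IsValFinalSegment S) (a : F) (D E : Set F)
    (hDB : ∀ d ∈ D, ∀ b ∈ vball S a, d < b)
    (hBE : ∀ b ∈ vball S a, ∀ e ∈ E, b < e)
    (hcover : D ∪ vball S a ∪ E = Set.univ) :
    ((∀ e ∈ E, ∀ d ∈ D, e - d ≠ 0 ∧ e - d ∉ S) ∧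
      ∀ x : F, x ≠ 0 → x ∉ S → ∃ e ∈ E, ∃ d ∈ D, veq (e - d) x) ∧
    ((∀ e ∈ E, ∀ b ∈ vball S a, e - b ≠ 0 ∧ e - b ∉ S) ∧
      ∀ x : F, x ≠ 0 → x ∉ S → ∃ e ∈ E, ∃ b ∈ vball S a, veq (e - b) x) ∧
    ((∀ b ∈ vball S a, ∀ d ∈ D, b - d ≠ 0 ∧ b - d ∉ S) ∧
      ∀ x : F, x ≠ 0 → x ∉ S → ∃ b ∈ vball S a, ∃ d ∈ D, veq (b - d) x) := by
  have haB : a ∈ vball S a := by simp [vball, hS.1]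
  have hEnB : ∀ e ∈ E, e ∉ vball S a := fun e he hball =>
    lt_irrefl e (hBE e hball e he)
  have hDnB : ∀ d ∈ D, d ∉ vball S a := fun d hd hball =>
    lt_irrefl d (hDB d hd d hball)
  -- nonmembership of differences
  have hEB : ∀ e ∈ E, ∀ b ∈ vball S a, e - b ≠ 0 ∧ e - b ∉ S := by
    intro e he b hb
    have hlt : b < e := hBE b hb e he
    refine ⟨sub_ne_zero.2 hlt.ne', fun hmem => hEnB e he ?_⟩
    have : (a - b) + (b - e) ∈ S := S_add' hS hb (by simpa using S_neg' hS hmem)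
    simpa [vball] using this
  have hBD : ∀ b ∈ vball S a, ∀ d ∈ D, b - d ≠ 0 ∧ b - d ∉ S := by
    intro b hb d hd
    have hlt : d < b := hDB d hd b hb
    refine ⟨sub_ne_zero.2 hlt.ne', fun hmem => hDnB d hd ?_⟩
    have : (a - b) + (b - d) ∈ S := S_add' hS hb hmem
    simpa [vball] using this
  have hED : ∀ e ∈ E, ∀ d ∈ D, e - d ≠ 0 ∧ e - d ∉ S := by
    intro e he d hd
    have hda : d < a := hDB d hd a haB
    have hae : a < e := hBE a haB e he
    refine ⟨sub_ne_zero.2 (by linarith : d < e).ne', fun hmem => hDnB d hd ?_⟩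
    have habs : |a - d| ≤ |e - d| := by
      rw [abs_of_pos (by linarith), abs_of_pos (by linarith)]; linarith
    exact mem_of_abs_le' hS hmem habs
  -- the witnesses
  have hwit : ∀ x : F, x ≠ 0 → x ∉ S → a + |x| ∈ E ∧ a - |x| ∈ D := by
    intro x hx0 hxS
    have hxpos : 0 < |x| := abs_pos.2 hx0
    have habsS : |x| ∉ S := fun h => hxS (mem_of_abs_le' hS h (by simp))
    have hnegS : -|x| ∉ S := fun h => habsS (by simpa using S_neg' hS h)
    have heB : a + |x| ∉ vball S a := by
      simp only [vball, Set.mem_setOf_eq]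
      simpa using hnegS
    have hdB : a - |x| ∉ vball S a := by
      simp only [vball, Set.mem_setOf_eq]
      simpa using habsS
    constructor
    · have : a + |x| ∈ D ∪ vball S a ∪ E := by rw [hcover]; trivial
      rcases this with (h | h) | h
      · exact absurd (hDB _ h a haB) (by linarith)
      · exact absurd h heB
      · exact h
    · have : a - |x| ∈ D ∪ vball S a ∪ E := by rw [hcover]; trivial
      rcases this with (h | h) | h
      · exact h
      · exact absurd h hdB
      · exact absurd (hBE a haB _ h) (by linarith)
  refine ⟨⟨hED, ?_⟩, ⟨hEB, ?_⟩, hBD, ?_⟩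
  · intro x hx0 hxS
    obtain ⟨he, hd⟩ := hwit x hx0 hxS
    refine ⟨a + |x|, he, a - |x|, hd, ?_⟩
    have h1 : a + |x| - (a - |x|) = 2 * |x| := by ring
    rw [h1]
    constructor
    · refine ⟨1, ?_⟩
      rw [abs_of_nonneg (by positivity : (0:F) ≤ 2 * |x|)]
      push_cast
      nlinarith [abs_nonneg x]
    · refine ⟨2, ?_⟩
      rw [abs_of_nonneg (by positivity : (0:F) ≤ 2 * |x|)]
      push_cast
      nlinarith [abs_nonneg x]
  · intro x hx0 hxS
    obtain ⟨he, _⟩ := hwit x hx0 hxS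
    refine ⟨a + |x|, he, a, haB, ?_⟩
    have h1 : a + |x| - a = |x| := by ring
    rw [h1]; exact veq_abs' x
  · intro x hx0 hxS
    obtain ⟨_, hd⟩ := hwit x hx0 hxS
    refine ⟨a, haB, a - |x|, hd, ?_⟩
    have h1 : a - (a - |x|) = |x| := by ring
    rw [h1]; exact veq_abs' x
end

section
/- Let $F|R$ be an extension of ordered fields with canonical valuation $v$, and let $D < E$ be nonempty subsets of $R$ forming either (i) a cut in $R$ (i.e., $D \cup E = R$) that is not a ball cut, with $\mathrm{Betw}_F(D,E) = \{c \in F : D < c < E\}$ nonempty, or (ii) a ball complement in $R$ (i.e., $D < B_0 < E$ and $R = D \cup B_0 \cup E$ for some ball $B_0$ in $R$). Then for every $a \in \mathrm{Betw}_F(D,E)$ one has $\mathrm{Betw}_F(D,E) = B_S(a,F)$, where $S$ is the largest final segment of $vF$ with $S > v(E-D)$. -/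
open Set

section Cuts
variable {α : Type*} [LinearOrder α]

/-- Cuts `(D, E)` in a linear order `α` are identified with their left parts `D`,
which are exactly the lower sets of `α` (with `E = α \ D`); they are ordered by
inclusion of left parts.  This order is linear. -/
instance : IsTotal (LowerSet α) (· ≤ ·) := by
  constructor
  intro s t
  by_cases h : (s : Set α) ⊆ (t : Set α)
  · exact Or.inl h
  · refine Or.inr fun x hx => ?_
    obtain ⟨a, ha, hat⟩ := not_subset.mp h
    by_cases hxa : x ≤ a
    · exact s.lower hxa ha
    · exact absurd (t.lower (le_of_not_ge hxa) hx) hat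

noncomputable instance : LinearOrder (LowerSet α) :=
  letI := Classical.decEq (LowerSet α)
  letI : DecidableRel ((· ≤ ·) : LowerSet α → LowerSet α → Prop) :=
    fun _ _ => Classical.propDecidable _
  letI : DecidableRel ((· < ·) : LowerSet α → LowerSet α → Prop) :=
    fun _ _ => Classical.propDecidable _
  Lattice.toLinearOrder _

/-- The interval (order) topology on the set of cuts. -/
instance : TopologicalSpace (LowerSet α) := Preorder.topology _
instance : OrderTopology (LowerSet α) := ⟨rfl⟩

/-- The principal cut `a⁺`, with left part `{x | x ≤ a}`. -/
def upCut (a : α) : LowerSet α := ⟨{x | x ≤ a}, fun _ _ hba ha => le_trans hba ha⟩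

/-- The principal cut `a⁻`, with left part `{x | x < a}`. -/
def lowCut (a : α) : LowerSet α := ⟨{x | x < a}, fun _ _ hba ha => lt_of_le_of_lt hba ha⟩

/-- The upper edge `A⁺` of a set `A`: the cut whose left part is the smallest
initial segment containing `A`. -/
def upperEdge (A : Set α) : LowerSet α :=
  ⟨{x | ∃ a ∈ A, x ≤ a}, fun _ _ hba ⟨c, hc, hac⟩ => ⟨c, hc, hba.trans hac⟩⟩

/-- The lower edge `A⁻` of a set `A`: the cut whose right part is the smallest
final segment containing `A` (given here by its left part). -/
def lowerEdge (A : Set α) : LowerSet α :=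
  ⟨{x | ∀ a ∈ A, x < a}, fun _ _ hba ha c hc => lt_of_le_of_lt hba (ha c hc)⟩

end Cuts

/-- The set of elements of `F` lying strictly between the subsets `D` and `E` of the
subfield `R`. -/
def Betw {F : Type*} [Field F] [LinearOrder F] [IsStrictOrderedRing F] (R : Subfield F) (D E : Set ↥R) : Set F :=
  {c : F | (∀ d ∈ D, (d : F) < c) ∧ ∀ e ∈ E, c < (e : F)}


section Aux
variable {K : Type*} [Field K] [LinearOrder K] [IsStrictOrderedRing K]

lemma vle_trans {x y z : K} (h1 : vle x y) (h2 : vle y z) : vle x z := by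
  obtain ⟨n, hn⟩ := h1; obtain ⟨m, hm⟩ := h2
  refine ⟨m * n, ?_⟩
  calc |z| ≤ (m:K) * |y| := hm
    _ ≤ (m:K) * ((n:K) * |x|) := by
        apply mul_le_mul_of_nonneg_left hn (by positivity)
    _ = ((m*n : ℕ):K) * |x| := by push_cast; ring

lemma not_vle_iff {x y : K} : ¬ vle x y ↔ ∀ n : ℕ, (n:K) * |x| < |y| := by
  unfold vle; push_neg; rfl

namespace IsValFinalSegment
variable {S : Set K} (hS : IsValFinalSegment S)
include hS

lemma neg_mem {x : K} (hx : x ∈ S) : -x ∈ S :=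
  hS.2 x hx (-x) ⟨1, by simp⟩

lemma add_mem {x y : K} (hx : x ∈ S) (hy : y ∈ S) : x + y ∈ S := by
  rcases le_total |x| |y| with h | h
  · exact hS.2 y hy _ ⟨2, by
      have := abs_add_le x y
      push_cast; linarith⟩
  · exact hS.2 x hx _ ⟨2, by
      have := abs_add_le x y
      push_cast; linarith⟩

lemma sub_mem {x y : K} (hx : x ∈ S) (hy : y ∈ S) : x - y ∈ S := by
  have := hS.add_mem hx (hS.neg_mem hy); simpa [sub_eq_add_neg] using this

lemma div_nat_not_mem {x : K} (hx : x ∉ S) {n : ℕ} (hn : n ≠ 0) : x / (n:K) ∉ S := by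
  intro h
  have hn' : (n:K) ≠ 0 := Nat.cast_ne_zero.mpr hn
  refine hx (hS.2 _ h x ⟨n, le_of_eq ?_⟩)
  rw [abs_div, abs_of_nonneg (by positivity : (0:K) ≤ (n:K))]
  field_simp

lemma big_of_not_mem {x s : K} (hx : x ∉ S) (hs : s ∈ S) (n : ℕ) :
    (n:K) * |s| < |x| := by
  by_contra h
  exact hx (hS.2 s hs x ⟨n, le_of_not_gt h⟩)

end IsValFinalSegment

end Aux

section SubfieldAux
variable {F : Type*} [Field F] [LinearOrder F] [IsStrictOrderedRing F] {R : Subfield F}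

@[simp, norm_cast]
lemma coe_abs' (x : ↥R) : ((|x| : ↥R) : F) = |(x:F)| := by
  rcases le_total 0 x with h | h
  · rw [abs_of_nonneg h, abs_of_nonneg (by exact_mod_cast h : (0:F) ≤ x)]
  · rw [abs_of_nonpos h, abs_of_nonpos (by exact_mod_cast h : (x:F) ≤ 0)]; push_cast; ring

end SubfieldAux


section Main
variable {F : Type*} [Field F] [LinearOrder F] [IsStrictOrderedRing F] {R : Subfield F} {D E : Set ↥R}

lemma mem_seg_iff (hDE : ∀ d ∈ D, ∀ e ∈ E, d < e) (x : F) :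
    (x = 0 ∨ ∀ e ∈ E, ∀ d ∈ D, vlt ((e : F) - (d : F)) x) ↔
    (∀ e ∈ E, ∀ d ∈ D, ∀ n : ℕ, (n:F) * |x| < (e:F) - (d:F)) := by
  constructor
  · rintro (rfl | h) e he d hd n
    · have : (d:F) < (e:F) := by exact_mod_cast hDE d hd e he
      simp only [abs_zero, mul_zero]; linarith
    · have h2 := (h e he d hd).2
      rw [not_vle_iff] at h2
      have := h2 n
      have hde : (d:F) < (e:F) := by exact_mod_cast hDE d hd e he
      rwa [abs_of_pos (by linarith : (0:F) < (e:F) - d)] at this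
  · intro h
    rcases eq_or_ne x 0 with rfl | hx
    · exact Or.inl rfl
    · refine Or.inr fun e he d hd => ?_
      have hde : (d:F) < (e:F) := by exact_mod_cast hDE d hd e he
      have h1 := h e he d hd 1
      constructor
      · exact ⟨1, by
          rw [abs_of_pos (by linarith : (0:F) < (e:F) - d)]
          push_cast at h1 ⊢; linarith⟩
      · rw [not_vle_iff]
        intro n
        have := h e he d hd n
        rwa [abs_of_pos (by linarith : (0:F) < (e:F) - d)]

lemma claimB_case1 (hDE : ∀ d ∈ D, ∀ e ∈ E, d < e) (hun : D ∪ E = Set.univ)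
    {a b : F} (ha : a ∈ Betw R D E) (hb : b ∈ Betw R D E)
    {e d : ↥R} (he : e ∈ E) (hd : d ∈ D) (n : ℕ) :
    (n:F) * |a - b| < (e:F) - (d:F) := by
  classical
  by_contra hcon
  push_neg at hcon
  have hde : (d:F) < (e:F) := by exact_mod_cast hDE d hd e he
  have hn : n ≠ 0 := by
    rintro rfl; simp at hcon
    have : (e:F) ≤ d := by exact_mod_cast hcon
    linarith
  set u := min a b with hu
  set w := max a b with hw
  have huB : u ∈ Betw R D E := by
    refine ⟨fun d' hd' => lt_min (ha.1 d' hd') (hb.1 d' hd'), fun e' he' => ?_⟩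
    calc u ≤ a := min_le_left a b
      _ < e' := ha.2 e' he'
  have hwB : w ∈ Betw R D E := by
    refine ⟨fun d' hd' => ?_, fun e' he' => max_lt (ha.2 e' he') (hb.2 e' he')⟩
    calc (d':F) < a := ha.1 d' hd'
      _ ≤ w := le_max_left a b
  have habs : |a - b| = w - u := by
    rw [abs_sub_comm]; exact (max_sub_min_eq_abs a b).symm
  have huw : u < w := by
    rcases lt_or_ge u w with h | h
    · exact h
    · exfalso
      have : w - u ≤ 0 := by linarith
      have : (n:F) * |a - b| ≤ 0 := by
        rw [habs]; apply mul_nonpos_of_nonneg_of_nonpos (by positivity) this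
      linarith
  have hn' : (0:F) < ((2*n : ℕ) : F) := by
    have : 0 < 2 * n := by omega
    exact_mod_cast this
  obtain ⟨σR, hσcoe⟩ : ∃ sR : ↥R, (sR : F) = ((e:F) - d) / ((2*n : ℕ) : F) :=
    ⟨(e - d) / ((2 * n : ℕ) : ↥R), by push_cast; norm_cast⟩
  have hσpos : (0:F) < σR := by
    rw [hσcoe]; exact div_pos (by linarith) hn' 
  have hσhalf : (σR : F) ≤ (w - u) / 2 := by
    rw [hσcoe]
    rw [div_le_div_iff₀ hn' (by norm_num : (0:F) < 2)]
    rw [habs] at hcon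
    have h1n : (1:F) ≤ (n:F) := by exact_mod_cast Nat.one_le_iff_ne_zero.mpr hn
    push_cast
    push_cast at hcon
    nlinarith [le_of_lt huw]
  have hkey : ∃ k : ℕ, u ≤ (d:F) + k * σR := by
    refine ⟨2 * n, ?_⟩
    have : (d:F) + (2*n : ℕ) * σR = e := by
      rw [hσcoe]; field_simp; ring
    rw [this]
    exact le_of_lt (huB.2 e he)
  obtain ⟨k₀, hspec, hminall⟩ : ∃ k : ℕ, (u ≤ (d:F) + k * σR) ∧
      ∀ j < k, ¬ (u ≤ (d:F) + j * σR) :=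
    ⟨Nat.find hkey, Nat.find_spec hkey, fun j hj => Nat.find_min hkey hj⟩
  have hk0ne : k₀ ≠ 0 := by
    intro h0
    rw [h0] at hspec
    simp only [Nat.cast_zero, zero_mul, add_zero] at hspec
    exact absurd (huB.1 d hd) (not_lt.mpr hspec)
  have hmin : (d:F) + (k₀ - 1 : ℕ) * σR < u := by
    have := hminall (k₀ - 1) (by omega)
    linarith [not_le.mp this]
  have hcast : ((k₀ - 1 : ℕ) : F) = (k₀ : F) - 1 := by
    have : 1 ≤ k₀ := by omega
    push_cast [Nat.cast_sub this]; ring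
  have hup : (d:F) + k₀ * σR < u + σR := by
    rw [hcast] at hmin; nlinarith [hσpos]
  have hltw : (d:F) + k₀ * σR < w := by
    have : (σR:F) < w - u := by linarith [hσhalf, huw]
    linarith
  obtain ⟨pR, hpcoe⟩ : ∃ p : ↥R, (p : F) = (d:F) + k₀ * σR :=
    ⟨d + (k₀ : ↥R) * σR, by push_cast; ring⟩
  have hpmem : pR ∈ D ∪ E := by rw [hun]; trivial
  rcases hpmem with hp | hp
  · have := huB.1 pR hp
    rw [hpcoe] at this
    linarith
  · have := hwB.2 pR hp
    rw [hpcoe] at this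
    linarith

lemma close_center (hDE : ∀ d ∈ D, ∀ e ∈ E, d < e) {c : ↥R} {S₀ : Set ↥R}
    (hS₀ : IsValFinalSegment S₀)
    (hDB : ∀ d ∈ D, ∀ b ∈ vball S₀ c, d < b) (hBE : ∀ b ∈ vball S₀ c, ∀ e ∈ E, b < e)
    (hun : D ∪ vball S₀ c ∪ E = Set.univ)
    {t : F} (ht : t ∈ Betw R D E) {e d : ↥R} (he : e ∈ E) (hd : d ∈ D) (n : ℕ) :
    (n:F) * |t - (c:F)| < (e:F) - (d:F) := by
  have hcB : c ∈ vball S₀ c := by show c - c ∈ S₀; simpa using hS₀.1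
  have hdc : d < c := hDB d hd c hcB
  have hce : c < e := hBE c hcB e he
  have hde : d < e := hDE d hd e he
  have hdeF : (d:F) < e := by exact_mod_cast hde
  have hdcF : (d:F) < c := by exact_mod_cast hdc
  have hceF : (c:F) < e := by exact_mod_cast hce
  have hcd_not : c - d ∉ S₀ := fun h => absurd (hDB d hd d h) (lt_irrefl d)
  have hec_not : e - c ∉ S₀ := by
    intro h
    have : c - e ∈ S₀ := by
      have := hS₀.neg_mem h; simpa [neg_sub] using this
    exact absurd (hBE e this e he) (lt_irrefl e)
  have hed_not : e - d ∉ S₀ := by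
    intro h
    refine hec_not (hS₀.2 _ h _ ⟨1, ?_⟩)
    rw [abs_of_pos (sub_pos.mpr hce), abs_of_pos (sub_pos.mpr hde)]
    push_cast
    have : (e:F) - c ≤ (e:F) - d := by linarith
    exact_mod_cast by push_cast; linarith
  have hSbound : ∀ s ∈ S₀, ∀ m : ℕ, (m:F) * |(s:F)| < (e:F) - d := by
    intro s hs m
    have := hS₀.big_of_not_mem hed_not hs m
    have h2 : ((m:↥R) * |s| : ↥R) < |e - d| := this
    have h3 : (m:F) * |(s:F)| < |(e:F) - d| := by exact_mod_cast h2
    rwa [abs_of_pos (show (0:F) < (e:F) - d by linarith)] at h3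
  by_cases h1 : ∀ b0 ∈ vball S₀ c, t ≤ (b0:F)
  · -- t below the ball
    have htc : t ≤ c := h1 c hcB
    have habs : |t - (c:F)| = (c:F) - t := by rw [abs_sub_comm, abs_of_nonneg (by linarith)]
    rw [habs]
    have key : (n:F) * ((c:F) - t) < (c:F) - d := by
      rcases eq_or_ne n 0 with rfl | hn
      · simpa using hdcF
      · obtain ⟨xn, hxn_coe, hxn_not⟩ : ∃ xn : ↥R, ((xn:F) = ((c:F) - d) / n) ∧ xn ∉ S₀ :=
          ⟨(c - d) / (n : ↥R), by push_cast; norm_cast,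
            hS₀.div_nat_not_mem hcd_not hn⟩
        have hnpos : (0:F) < n := by exact_mod_cast Nat.pos_of_ne_zero hn
        have hxnpos : (0:F) < xn := by
          rw [hxn_coe]; exact div_pos (by linarith) hnpos
        obtain ⟨r, hr_coe⟩ : ∃ r : ↥R, (r:F) = (c:F) - xn := ⟨c - xn, by push_cast; ring⟩
        have hrB : r ∉ vball S₀ c := by
          intro h
          have : c - r ∈ S₀ := h
          have : (c - r : ↥R) = xn := by
            apply Subtype.coe_injective; push_cast; rw [hr_coe]; ring
          exact hxn_not (this ▸ h)
        have hrE : r ∉ E := by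
          intro h
          have := hBE c hcB r h
          have : (c:F) < r := by exact_mod_cast this
          rw [hr_coe] at this; linarith
        have hrD : r ∈ D := by
          have : r ∈ D ∪ vball S₀ c ∪ E := by rw [hun]; trivial
          rcases this with (h | h) | h
          · exact h
          · exact absurd h hrB
          · exact absurd h hrE
        have hrt := ht.1 r hrD
        rw [hr_coe] at hrt
        have hct : (c:F) - t < xn := by linarith
        have : (n:F) * ((c:F) - t) < (n:F) * xn := by
          apply mul_lt_mul_of_pos_left hct hnpos
        rw [hxn_coe] at this
        rw [mul_div_cancel₀ _ (ne_of_gt hnpos)] at this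
        linarith
    linarith
  · by_cases h2 : ∀ b0 ∈ vball S₀ c, (b0:F) ≤ t
    · -- t above the ball
      have htc : (c:F) ≤ t := h2 c hcB
      have habs : |t - (c:F)| = t - c := abs_of_nonneg (by linarith)
      rw [habs]
      have key : (n:F) * (t - c) < (e:F) - c := by
        rcases eq_or_ne n 0 with rfl | hn
        · simpa using hceF
        · obtain ⟨xn, hxn_coe, hxn_not⟩ : ∃ xn : ↥R, ((xn:F) = ((e:F) - c) / n) ∧ xn ∉ S₀ :=
            ⟨(e - c) / (n : ↥R), by push_cast; norm_cast,
              hS₀.div_nat_not_mem hec_not hn⟩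
          have hnpos : (0:F) < n := by exact_mod_cast Nat.pos_of_ne_zero hn
          have hxnpos : (0:F) < xn := by
            rw [hxn_coe]; exact div_pos (by linarith) hnpos
          obtain ⟨r, hr_coe⟩ : ∃ r : ↥R, (r:F) = (c:F) + xn := ⟨c + xn, by push_cast; ring⟩
          have hrB : r ∉ vball S₀ c := by
            intro h
            have hmem : c - r ∈ S₀ := h
            have hneg : (-(c - r) : ↥R) ∈ S₀ := hS₀.neg_mem hmem
            have : (-(c - r) : ↥R) = xn := by
              apply Subtype.coe_injective; push_cast; rw [hr_coe]; ring
            exact hxn_not (this ▸ hneg)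
          have hrD : r ∉ D := by
            intro h
            have := hDB r h c hcB
            have : (r:F) < c := by exact_mod_cast this
            rw [hr_coe] at this; linarith
          have hrE : r ∈ E := by
            have : r ∈ D ∪ vball S₀ c ∪ E := by rw [hun]; trivial
            rcases this with (h | h) | h
            · exact absurd h hrD
            · exact absurd h hrB
            · exact h
          have hrt := ht.2 r hrE
          rw [hr_coe] at hrt
          have hct : t - c < xn := by linarith
          have : (n:F) * (t - c) < (n:F) * xn := mul_lt_mul_of_pos_left hct hnpos
          rw [hxn_coe, mul_div_cancel₀ _ (ne_of_gt hnpos)] at this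
          linarith
      linarith
    · -- t inside the hull of the ball
      push_neg at h1 h2
      obtain ⟨b1, hb1, hb1t⟩ := h1
      obtain ⟨b2, hb2, htb2⟩ := h2
      have hs1 : c - b1 ∈ S₀ := hb1
      have hs2 : c - b2 ∈ S₀ := hb2
      have hA := hSbound _ hs1 (2*n)
      have hB := hSbound _ hs2 (2*n)
      have habs1 : |((c - b1 : ↥R) : F)| = |(b1:F) - c| := by push_cast; rw [abs_sub_comm]
      have habs2 : |((c - b2 : ↥R) : F)| = |(b2:F) - c| := by push_cast; rw [abs_sub_comm]
      rw [habs1] at hA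
      rw [habs2] at hB
      push_cast at hA hB
      have htri : |t - (c:F)| ≤ |(b1:F) - c| + |(b2:F) - c| := by
        rw [abs_le]
        constructor
        · have hh := neg_abs_le ((b1:F) - c)
          have h2' := abs_nonneg ((b2:F) - c)
          linarith [hb1t.le]
        · have hh := le_abs_self ((b2:F) - c)
          have h1' := abs_nonneg ((b1:F) - c)
          linarith [htb2.le]
      have hnn : (0:F) ≤ n := Nat.cast_nonneg n
      have hmul := mul_le_mul_of_nonneg_left htri hnn
      linarith [hmul, hA, hB, mul_add (n:F) (|(b1:F) - c|) (|(b2:F) - c|)]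

lemma claimB_case2 (hDE : ∀ d ∈ D, ∀ e ∈ E, d < e) {c : ↥R} {S₀ : Set ↥R}
    (hS₀ : IsValFinalSegment S₀)
    (hDB : ∀ d ∈ D, ∀ b ∈ vball S₀ c, d < b) (hBE : ∀ b ∈ vball S₀ c, ∀ e ∈ E, b < e)
    (hun : D ∪ vball S₀ c ∪ E = Set.univ)
    {a b : F} (ha : a ∈ Betw R D E) (hb : b ∈ Betw R D E)
    {e d : ↥R} (he : e ∈ E) (hd : d ∈ D) (n : ℕ) :
    (n:F) * |a - b| < (e:F) - (d:F) := by
  have h1 := close_center hDE hS₀ hDB hBE hun ha he hd (2*n)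
  have h2 := close_center hDE hS₀ hDB hBE hun hb he hd (2*n)
  push_cast at h1 h2
  have htri : |a - b| ≤ |a - (c:F)| + |b - (c:F)| := by
    have := abs_sub_abs_le_abs_sub (a - c) (b - c)
    calc |a - b| = |(a - (c:F)) - (b - c)| := by ring_nf
      _ ≤ |a - (c:F)| + |b - c| := abs_sub _ _
  have hnn : (0:F) ≤ n := Nat.cast_nonneg n
  have hmul := mul_le_mul_of_nonneg_left htri hnn
  linarith [hmul, mul_add (n:F) (|a - (c:F)|) (|b - (c:F)|)]

lemma claimA (hDE : ∀ d ∈ D, ∀ e ∈ E, d < e)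
    (hcase :
      (D ∪ E = Set.univ ∧
        (∀ B : Set ↥R, IsBall B →
          D ≠ ((upperEdge B : LowerSet ↥R) : Set ↥R) ∧
          D ≠ ((lowerEdge B : LowerSet ↥R) : Set ↥R)) ∧
        (Betw R D E).Nonempty) ∨
      (∃ B0 : Set ↥R, IsBall B0 ∧ (∀ d ∈ D, ∀ b ∈ B0, d < b) ∧
        (∀ b ∈ B0, ∀ e ∈ E, b < e) ∧ D ∪ B0 ∪ E = Set.univ))
    {a b : F} (ha : a ∈ Betw R D E)
    (hP : ∀ e ∈ E, ∀ d ∈ D, ∀ n : ℕ, (n:F) * |a - b| < (e:F) - (d:F)) :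
    b ∈ Betw R D E := by
  constructor
  · -- lower part : ∀ d' ∈ D, (d':F) < b
    intro d' hd'
    by_contra hbd'
    push_neg at hbd'
    have had' : (d':F) < a := ha.1 d' hd'
    have hεle : a - (d':F) ≤ |a - b| := by
      have := le_abs_self (a - b); linarith
    have Hε : ∀ e ∈ E, ∀ d ∈ D, ∀ n : ℕ, (n:F) * (a - d') < (e:F) - (d:F) := by
      intro e he d hd n
      calc (n:F) * (a - d') ≤ (n:F) * |a - b| :=
            mul_le_mul_of_nonneg_left hεle (Nat.cast_nonneg n)
        _ < _ := hP e he d hd n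
    rcases hcase with ⟨hun, hnb, -⟩ | ⟨B0, ⟨c, S₀, hS₀, rfl⟩, hDB, hBE, hun⟩
    · -- case (i)
      set S₁ : Set ↥R := {x : ↥R | ∀ e ∈ E, ∀ m : ℕ, (m:↥R) * |x| < e - d'} with hS₁def
      have hfin : IsValFinalSegment S₁ := by
        constructor
        · intro e he m
          simp only [abs_zero, mul_zero]
          exact sub_pos.mpr (hDE d' hd' e he)
        · rintro x hx y ⟨k, hk⟩ e he m
          calc (m:↥R) * |y| ≤ (m:↥R) * ((k:↥R) * |x|) :=
                mul_le_mul_of_nonneg_left hk (by positivity)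
            _ = ((m*k : ℕ):↥R) * |x| := by push_cast; ring
            _ < e - d' := hx e he (m*k)
      have hball : IsBall (vball S₁ d') := ⟨d', S₁, hfin, rfl⟩
      have hBD : ∀ r, r ∈ vball S₁ d' → r ∈ D := by
        intro r hr
        have hrS : d' - r ∈ S₁ := hr
        have hmem : r ∈ D ∪ E := by rw [hun]; trivial
        rcases hmem with h | h
        · exact h
        · exfalso
          have h1 := hrS r h 1
          have hd'r : d' < r := hDE d' hd' r h
          rw [abs_of_neg (sub_neg.mpr hd'r), neg_sub, Nat.cast_one, one_mul] at h1
          exact lt_irrefl _ h1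
      have hEq : D = ((upperEdge (vball S₁ d') : LowerSet ↥R) : Set ↥R) := by
        ext x
        constructor
        · intro hx
          rcases le_or_gt x d' with h | h
          · exact ⟨d', by show d' - d' ∈ S₁; simpa using hfin.1, h⟩
          · refine ⟨x, ?_, le_refl x⟩
            show d' - x ∈ S₁
            intro e he m
            have hxa : (x:F) < a := ha.1 x hx
            have hF : (m:F) * |(d':F) - (x:F)| < (e:F) - (d':F) := by
              rw [abs_of_neg (show (d':F) - x < 0 by exact_mod_cast sub_neg.mpr h), neg_sub]
              have h1 : (m:F) * ((x:F) - d') ≤ (m:F) * (a - d') :=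
                mul_le_mul_of_nonneg_left (by linarith) (Nat.cast_nonneg m)
              linarith [Hε e he d' hd' m]
            exact_mod_cast hF
        · rintro ⟨r, hr, hxr⟩
          have hrD := hBD r hr
          have hxrF : (x:F) ≤ r := by exact_mod_cast hxr
          have hra : (r:F) < a := ha.1 r hrD
          have hmem : x ∈ D ∪ E := by rw [hun]; trivial
          rcases hmem with h | h
          · exact h
          · exfalso; have := ha.2 x h; linarith
      exact (hnb _ hball).1 hEq
    · -- case (ii)
      by_cases hex : ∃ b0 ∈ vball S₀ c, (b0:F) < a
      · obtain ⟨b0, hb0, hb0a⟩ := hex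
        have hd'b0 : d' < b0 := hDB d' hd' b0 hb0
        have hd'b0F : (d':F) < b0 := by exact_mod_cast hd'b0
        obtain ⟨δ, hδ⟩ : ∃ δ : ↥R, (δ:F) = (b0:F) - d' := ⟨b0 - d', by push_cast; ring⟩
        have hδpos : (0:F) < δ := by rw [hδ]; linarith
        have hδε : (δ:F) < a - d' := by rw [hδ]; linarith
        have hlt : ∀ e ∈ E, ((b0:F) + δ) < e := by
          intro e he
          have h2 := Hε e he d' hd' 2
          push_cast at h2
          rw [hδ]; linarith
        obtain ⟨q, hq⟩ : ∃ q : ↥R, (q:F) = (b0:F) + δ := ⟨b0 + δ, by push_cast; ring⟩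
        have hqD : q ∉ D := by
          intro h
          have h2 := hDB q h b0 hb0
          have h3 : (q:F) < b0 := by exact_mod_cast h2
          rw [hq] at h3; linarith
        have hqE : q ∉ E := by
          intro h
          have h2 := hlt q h
          rw [hq] at h2; linarith
        have hqB : q ∈ vball S₀ c := by
          have hmem : q ∈ D ∪ vball S₀ c ∪ E := by rw [hun]; trivial
          rcases hmem with (h | h) | h
          · exact absurd h hqD
          · exact h
          · exact absurd h hqE
        have h1 : c - b0 ∈ S₀ := hb0
        have h2 : c - q ∈ S₀ := hqB
        have hδS : δ ∈ S₀ := by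
          have h3 := hS₀.sub_mem h1 h2
          have heq : (c - b0) - (c - q) = δ := by
            apply Subtype.coe_injective; push_cast; rw [hq, hδ]; ring
          rwa [heq] at h3
        have hd'B : d' ∈ vball S₀ c := by
          show c - d' ∈ S₀
          have h3 := hS₀.add_mem h1 hδS
          have heq : (c - b0) + δ = c - d' := by
            apply Subtype.coe_injective; push_cast; rw [hδ]; ring
          rwa [heq] at h3
        exact absurd (hDB d' hd' d' hd'B) (lt_irrefl d')
      · push_neg at hex
        have hcB : c ∈ vball S₀ c := by show c - c ∈ S₀; simpa using hS₀.1
        have hd'c : d' < c := hDB d' hd' c hcB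
        have hd'cF : (d':F) < c := by exact_mod_cast hd'c
        have hxS : c - d' ∉ S₀ := by
          intro h
          exact absurd (hDB d' hd' d' h) (lt_irrefl d')
        obtain ⟨estar, hestar⟩ : ∃ q : ↥R, (q:F) = (c:F) + ((c:F) - d') :=
          ⟨c + (c - d'), by push_cast; ring⟩
        have hestarB : estar ∉ vball S₀ c := by
          intro h
          have hneg : -(c - estar) ∈ S₀ := hS₀.neg_mem h
          have heq : -(c - estar) = c - d' := by
            apply Subtype.coe_injective; push_cast; rw [hestar]; ring
          exact hxS (heq ▸ hneg)
        have hestarD : estar ∉ D := by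
          intro h
          have h2 := hDB estar h c hcB
          have h3 : (estar:F) < c := by exact_mod_cast h2
          rw [hestar] at h3; linarith
        have hestarE : estar ∈ E := by
          have hmem : estar ∈ D ∪ vball S₀ c ∪ E := by rw [hun]; trivial
          rcases hmem with (h | h) | h
          · exact absurd h hestarD
          · exact absurd h hestarB
          · exact h
        have h4 := Hε estar hestarE d' hd' 4
        rw [hestar] at h4
        push_cast at h4
        -- h4 : 4*(a - d') < 2*((c:F) - d')
        obtain ⟨x4, hx4coe, hx4S⟩ : ∃ y : ↥R, ((y:F) = ((c:F) - d')/4) ∧ y ∉ S₀ :=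
          ⟨(c - d') / ((4:ℕ):↥R), by push_cast; norm_cast,
            hS₀.div_nat_not_mem hxS (by norm_num)⟩
        have hx4pos : (0:F) < x4 := by rw [hx4coe]; linarith
        obtain ⟨r, hr⟩ : ∃ r : ↥R, (r:F) = (c:F) - x4 := ⟨c - x4, by push_cast; ring⟩
        have hrB : r ∉ vball S₀ c := by
          intro h
          have heq : c - r = x4 := by
            apply Subtype.coe_injective; push_cast; rw [hr]; ring
          exact hx4S (heq ▸ h)
        have hrE : r ∉ E := by
          intro h
          have h2 := hBE c hcB r h
          have h3 : (c:F) < r := by exact_mod_cast h2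
          rw [hr] at h3; linarith
        have hrD : r ∈ D := by
          have hmem : r ∈ D ∪ vball S₀ c ∪ E := by rw [hun]; trivial
          rcases hmem with (h | h) | h
          · exact h
          · exact absurd h hrB
          · exact absurd h hrE
        have hra := ha.1 r hrD
        rw [hr, hx4coe] at hra
        linarith
  · -- upper part : ∀ e' ∈ E, b < e'
    intro e' he'
    by_contra hbe'
    push_neg at hbe'
    have hae' : a < (e':F) := ha.2 e' he'
    have hεle : (e':F) - a ≤ |a - b| := by
      have := neg_abs_le (a - b); linarith
    have Hε : ∀ e ∈ E, ∀ d ∈ D, ∀ n : ℕ, (n:F) * ((e':F) - a) < (e:F) - (d:F) := by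
      intro e he d hd n
      calc (n:F) * ((e':F) - a) ≤ (n:F) * |a - b| :=
            mul_le_mul_of_nonneg_left hεle (Nat.cast_nonneg n)
        _ < _ := hP e he d hd n
    rcases hcase with ⟨hun, hnb, -⟩ | ⟨B0, ⟨c, S₀, hS₀, rfl⟩, hDB, hBE, hun⟩
    · -- case (i)
      set S₂ : Set ↥R := {x : ↥R | ∀ d ∈ D, ∀ m : ℕ, (m:↥R) * |x| < e' - d} with hS₂def
      have hfin : IsValFinalSegment S₂ := by
        constructor
        · intro d hd m
          simp only [abs_zero, mul_zero]
          exact sub_pos.mpr (hDE d hd e' he')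
        · rintro x hx y ⟨k, hk⟩ d hd m
          calc (m:↥R) * |y| ≤ (m:↥R) * ((k:↥R) * |x|) :=
                mul_le_mul_of_nonneg_left hk (by positivity)
            _ = ((m*k : ℕ):↥R) * |x| := by push_cast; ring
            _ < e' - d := hx d hd (m*k)
      have hball : IsBall (vball S₂ e') := ⟨e', S₂, hfin, rfl⟩
      have he'B : e' ∈ vball S₂ e' := by show e' - e' ∈ S₂; simpa using hfin.1
      have hEq : D = ((lowerEdge (vball S₂ e') : LowerSet ↥R) : Set ↥R) := by
        ext x
        constructor
        · intro hx r hr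
          have hrS : e' - r ∈ S₂ := hr
          have h1 := hrS x hx 1
          have h2 : e' - r ≤ |e' - r| := le_abs_self _
          have h3 : (1:↥R) * |e' - r| < e' - x := by exact_mod_cast h1
          rw [one_mul] at h3
          have : e' - r < e' - x := lt_of_le_of_lt h2 h3
          exact sub_lt_sub_iff_left e' |>.mp this
        · intro hx
          have hxe' : x < e' := hx e' he'B
          have hmem : x ∈ D ∪ E := by rw [hun]; trivial
          rcases hmem with h | h
          · exact h
          · exfalso
            have hax : a < (x:F) := ha.2 x h
            have hxB : x ∈ vball S₂ e' := by
              show e' - x ∈ S₂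
              intro d hd m
              have hF : (m:F) * |(e':F) - (x:F)| < (e':F) - (d:F) := by
                rw [abs_of_pos (show (0:F) < (e':F) - x by exact_mod_cast sub_pos.mpr hxe')]
                have h1 : (m:F) * ((e':F) - x) ≤ (m:F) * ((e':F) - a) :=
                  mul_le_mul_of_nonneg_left (by linarith) (Nat.cast_nonneg m)
                linarith [Hε e' he' d hd m]
              exact_mod_cast hF
            exact lt_irrefl x (hx x hxB)
      exact (hnb _ hball).2 hEq
    · -- case (ii)
      by_cases hex : ∃ b0 ∈ vball S₀ c, a < (b0:F)
      · obtain ⟨b0, hb0, hab0⟩ := hex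
        have hb0e' : b0 < e' := hBE b0 hb0 e' he'
        have hb0e'F : (b0:F) < e' := by exact_mod_cast hb0e'
        obtain ⟨δ, hδ⟩ : ∃ δ : ↥R, (δ:F) = (e':F) - b0 := ⟨e' - b0, by push_cast; ring⟩
        have hδpos : (0:F) < δ := by rw [hδ]; linarith
        have hδε : (δ:F) < (e':F) - a := by rw [hδ]; linarith
        have hgt : ∀ d ∈ D, (d:F) < (b0:F) - δ := by
          intro d hd
          have h2 := Hε e' he' d hd 2
          push_cast at h2
          rw [hδ]; linarith
        obtain ⟨q, hq⟩ : ∃ q : ↥R, (q:F) = (b0:F) - δ := ⟨b0 - δ, by push_cast; ring⟩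
        have hqE : q ∉ E := by
          intro h
          have h2 := hBE b0 hb0 q h
          have h3 : (b0:F) < q := by exact_mod_cast h2
          rw [hq] at h3; linarith
        have hqD : q ∉ D := by
          intro h
          have h2 := hgt q h
          rw [hq] at h2; linarith
        have hqB : q ∈ vball S₀ c := by
          have hmem : q ∈ D ∪ vball S₀ c ∪ E := by rw [hun]; trivial
          rcases hmem with (h | h) | h
          · exact absurd h hqD
          · exact h
          · exact absurd h hqE
        have h1 : c - b0 ∈ S₀ := hb0
        have h2 : c - q ∈ S₀ := hqB
        have hδS : δ ∈ S₀ := by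
          have h3 := hS₀.sub_mem h2 h1
          have heq : (c - q) - (c - b0) = δ := by
            apply Subtype.coe_injective; push_cast; rw [hq, hδ]; ring
          rwa [heq] at h3
        have he'B : e' ∈ vball S₀ c := by
          show c - e' ∈ S₀
          have h3 := hS₀.sub_mem h1 hδS
          have heq : (c - b0) - δ = c - e' := by
            apply Subtype.coe_injective; push_cast; rw [hδ]; ring
          rwa [heq] at h3
        exact absurd (hBE e' he'B e' he') (lt_irrefl e')
      · push_neg at hex
        have hcB : c ∈ vball S₀ c := by show c - c ∈ S₀; simpa using hS₀.1
        have hce' : c < e' := hBE c hcB e' he'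
        have hce'F : (c:F) < e' := by exact_mod_cast hce'
        have hxS : e' - c ∉ S₀ := by
          intro h
          have : c - e' ∈ S₀ := by
            have := hS₀.neg_mem h
            simpa [neg_sub] using this
          exact absurd (hBE e' this e' he') (lt_irrefl e')
        obtain ⟨dstar, hdstar⟩ : ∃ q : ↥R, (q:F) = (c:F) - ((e':F) - c) :=
          ⟨c - (e' - c), by push_cast; ring⟩
        have hdstarB : dstar ∉ vball S₀ c := by
          intro h
          have heq : c - dstar = e' - c := by
            apply Subtype.coe_injective; push_cast; rw [hdstar]; ring
          exact hxS (heq ▸ h)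
        have hdstarE : dstar ∉ E := by
          intro h
          have h2 := hBE c hcB dstar h
          have h3 : (c:F) < dstar := by exact_mod_cast h2
          rw [hdstar] at h3; linarith
        have hdstarD : dstar ∈ D := by
          have hmem : dstar ∈ D ∪ vball S₀ c ∪ E := by rw [hun]; trivial
          rcases hmem with (h | h) | h
          · exact h
          · exact absurd h hdstarB
          · exact absurd h hdstarE
        have h4 := Hε e' he' dstar hdstarD 4
        rw [hdstar] at h4
        push_cast at h4
        obtain ⟨x4, hx4coe, hx4S⟩ : ∃ y : ↥R, ((y:F) = ((e':F) - c)/4) ∧ y ∉ S₀ :=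
          ⟨(e' - c) / ((4:ℕ):↥R), by push_cast; norm_cast,
            hS₀.div_nat_not_mem hxS (by norm_num)⟩
        have hx4pos : (0:F) < x4 := by rw [hx4coe]; linarith
        obtain ⟨r, hr⟩ : ∃ r : ↥R, (r:F) = (c:F) + x4 := ⟨c + x4, by push_cast; ring⟩
        have hrB : r ∉ vball S₀ c := by
          intro h
          have hneg : -(c - r) ∈ S₀ := hS₀.neg_mem h
          have heq : -(c - r) = x4 := by
            apply Subtype.coe_injective; push_cast; rw [hr]; ring
          exact hx4S (heq ▸ hneg)
        have hrD : r ∉ D := by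
          intro h
          have h2 := hDB r h c hcB
          have h3 : (r:F) < c := by exact_mod_cast h2
          rw [hr] at h3; linarith
        have hrE : r ∈ E := by
          have hmem : r ∈ D ∪ vball S₀ c ∪ E := by rw [hun]; trivial
          rcases hmem with (h | h) | h
          · exact absurd h hrD
          · exact absurd h hrB
          · exact h
        have hra := ha.2 r hrE
        rw [hr, hx4coe] at hra
        linarith

end Main

/-- take nonempty `D < E` in `R` forming either (i) a non-ball cut in `R`
that is filled in `F`, or (ii) a ball complement in `R`.  Then for every
`a ∈ Betw_F(D,E)` one has `Betw_F(D,E) = B_S(a,F)`, where `S` is the largest final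
segment of `vF` with `S > v(E-D)`, namely (together with `∞`, encoded by `0`)
`S = {x ≠ 0 | ∀ e ∈ E, d ∈ D, v(e-d) < v x}`; in particular this `S` is a final
segment. -/
theorem betw_eq_ball {F : Type*} [Field F] [LinearOrder F] [IsStrictOrderedRing F] (R : Subfield F) (D E : Set ↥R)
    (hD : D.Nonempty) (hE : E.Nonempty) (hDE : ∀ d ∈ D, ∀ e ∈ E, d < e)
    (hcase :
      (D ∪ E = Set.univ ∧
        (∀ B : Set ↥R, IsBall B →
          D ≠ ((upperEdge B : LowerSet ↥R) : Set ↥R) ∧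
          D ≠ ((lowerEdge B : LowerSet ↥R) : Set ↥R)) ∧
        (Betw R D E).Nonempty) ∨
      (∃ B0 : Set ↥R, IsBall B0 ∧ (∀ d ∈ D, ∀ b ∈ B0, d < b) ∧
        (∀ b ∈ B0, ∀ e ∈ E, b < e) ∧ D ∪ B0 ∪ E = Set.univ)) :
    IsValFinalSegment {x : F | x = 0 ∨ ∀ e ∈ E, ∀ d ∈ D, vlt ((e : F) - (d : F)) x} ∧
    ∀ a ∈ Betw R D E,
      Betw R D E =
        vball {x : F | x = 0 ∨ ∀ e ∈ E, ∀ d ∈ D, vlt ((e : F) - (d : F)) x} a := by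
  have hfin : IsValFinalSegment
      {x : F | x = 0 ∨ ∀ e ∈ E, ∀ d ∈ D, vlt ((e : F) - (d : F)) x} := by
    constructor
    · exact Or.inl rfl
    · rintro x (rfl | hx) y hvle
      · obtain ⟨n, hn⟩ := hvle
        simp only [abs_zero, mul_zero] at hn
        exact Or.inl (abs_nonpos_iff.mp hn)
      · refine Or.inr fun e he d hd => ?_
        exact ⟨vle_trans (hx e he d hd).1 hvle,
          fun hc => (hx e he d hd).2 (vle_trans hvle hc)⟩
  refine ⟨hfin, fun a ha => ?_⟩
  ext b
  constructor
  · intro hb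
    show a - b ∈ {x : F | x = 0 ∨ ∀ e ∈ E, ∀ d ∈ D, vlt ((e : F) - (d : F)) x}
    refine (mem_seg_iff hDE (a - b)).mpr ?_
    intro e he d hd n
    rcases hcase with ⟨hun, hnb, -⟩ | ⟨B0, ⟨c, S₀, hS₀, rfl⟩, hDB, hBE, hun⟩
    · exact claimB_case1 hDE hun ha hb he hd n
    · exact claimB_case2 hDE hS₀ hDB hBE hun ha hb he hd n
  · intro hb
    have hb' : a - b = 0 ∨ ∀ e ∈ E, ∀ d ∈ D, vlt ((e : F) - (d : F)) (a - b) := hb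
    exact claimA hDE hcase ha ((mem_seg_iff hDE (a - b)).mp hb')
end

section
/- Let $K \subseteq L$ be fields, and suppose $\xi$ is a $K$-rational place of $L$, i.e., a place of $L$ that is trivial (identity) on $K$ with residue field $K$ (image $K \cup \{\infty\}$). Then the map $\iota: M(K) \to M(L)$ defined by $\iota(\zeta) = \zeta \circ \xi$ is a continuous embedding compatible with restriction, i.e., $\iota$ is injective, continuous, and $\iota(\zeta)|_K = \zeta$ for all $\zeta \in M(K)$. -/
open Set

section Places
open scoped Classical

/-- A place of the field `L` with values in the field `K` (together with `∞ = ⊤`):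
it maps `1` to `1`, is additive and multiplicative on elements with finite value, and
elements with value `∞` are nonzero with inverse of value `0`. -/
def IsPlaceFun {L K : Type*} [Field L] [Field K] (f : L → WithTop K) : Prop :=
  f 1 = 1 ∧
  (∀ x y : L, f x ≠ ⊤ → f y ≠ ⊤ → f (x + y) = f x + f y) ∧
  (∀ x y : L, f x ≠ ⊤ → f y ≠ ⊤ → f (x * y) = f x * f y) ∧
  ∀ x : L, f x = ⊤ → x ≠ 0 ∧ f x⁻¹ = 0

/-- Composition of places: `ζ ∘ ξ`, with `ζ(∞) = ∞`. -/
def placeComp {L K : Type*} [Field L] [Field K] (zeta : K → WithTop ℝ)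
    (xi : L → WithTop K) : L → WithTop ℝ :=
  fun x => WithTop.recTopCoe ⊤ zeta (xi x)

/-- The space `M(K)` of `ℝ`-places of `K`: places `K → ℝ ∪ {∞}`. -/
def RPlaces (K : Type*) [Field K] : Type _ := {f : K → WithTop ℝ // IsPlaceFun f}

/-- The subbasic open set `H'(b) = {ζ ∈ M(K) | ∞ ≠ ζ(b) > 0}`. -/
def Hpos {K : Type*} [Field K] (b : K) : Set (RPlaces K) :=
  {zeta : RPlaces K | ∃ r : ℝ, 0 < r ∧ zeta.1 b = (r : WithTop ℝ)}

/-- The topology on `M(K)` generated by the subbasic sets `H'(b)`, `b ∈ K`. -/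
instance (K : Type*) [Field K] : TopologicalSpace (RPlaces K) :=
  TopologicalSpace.generateFrom {U | ∃ b : K, U = Hpos b}

end Places

section Aux
open scoped Classical

lemma place_zero {L K : Type*} [Field L] [Field K] {f : L → WithTop K}
    (hf : IsPlaceFun f) : f 0 = 0 := by
  obtain ⟨h1, hadd, hmul, hinf⟩ := hf
  have h0 : f 0 ≠ ⊤ := fun h => (hinf 0 h).1 rfl
  have h1t : f 1 ≠ ⊤ := by rw [h1]; exact WithTop.one_ne_top
  have h := hadd 1 0 h1t h0
  rw [add_zero, h1] at h
  obtain ⟨a, ha⟩ := WithTop.ne_top_iff_exists.mp h0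
  rw [← ha, ← WithTop.coe_one, ← WithTop.coe_add, WithTop.coe_inj] at h
  rw [← ha, show a = 0 from (left_eq_add.mp h), WithTop.coe_zero]

lemma place_inv {L K : Type*} [Field L] [Field K] {f : L → WithTop K}
    (hf : IsPlaceFun f) {x : L} {a : K} (hx : f x = (a : WithTop K)) (ha : a ≠ 0) :
    x ≠ 0 ∧ f x⁻¹ = ((a⁻¹ : K) : WithTop K) := by
  obtain ⟨h1, hadd, hmul, hinf⟩ := hf
  have hz := place_zero ⟨h1, hadd, hmul, hinf⟩
  have hx0 : x ≠ 0 := by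
    rintro rfl
    rw [hz] at hx
    exact ha (by exact_mod_cast hx.symm)
  refine ⟨hx0, ?_⟩
  have hxt : f x ≠ ⊤ := by rw [hx]; exact WithTop.coe_ne_top
  have hit : f x⁻¹ ≠ ⊤ := by
    intro h
    have := (hinf _ h).2
    rw [inv_inv, hx] at this
    exact ha (by exact_mod_cast this)
  obtain ⟨b, hb⟩ := WithTop.ne_top_iff_exists.mp hit
  have hm := hmul x x⁻¹ hxt hit
  rw [mul_inv_cancel₀ hx0, h1, hx, ← hb, ← WithTop.coe_mul, ← WithTop.coe_one,
    WithTop.coe_inj] at hm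
  rw [← hb, WithTop.coe_inj]
  exact (inv_eq_of_mul_eq_one_right hm.symm).symm

lemma placeComp_top {L K : Type*} [Field L] [Field K] {zeta : K → WithTop ℝ}
    {xi : L → WithTop K} {x : L} (h : xi x = ⊤) : placeComp zeta xi x = ⊤ := by
  simp [placeComp, h]

lemma placeComp_coe {L K : Type*} [Field L] [Field K] {zeta : K → WithTop ℝ}
    {xi : L → WithTop K} {x : L} {a : K} (h : xi x = (a : WithTop K)) :
    placeComp zeta xi x = zeta a := by
  simp [placeComp, h]

lemma placeComp_isPlaceFun {L K : Type*} [Field L] [Field K] {zeta : K → WithTop ℝ}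
    {xi : L → WithTop K} (hz : IsPlaceFun zeta) (hxi : IsPlaceFun xi) :
    IsPlaceFun (placeComp zeta xi) := by
  obtain ⟨z1, zadd, zmul, zinf⟩ := hz
  obtain ⟨x1, xadd, xmul, xinf⟩ := hxi
  have hz' : IsPlaceFun zeta := ⟨z1, zadd, zmul, zinf⟩
  have hxi' : IsPlaceFun xi := ⟨x1, xadd, xmul, xinf⟩
  refine ⟨?_, ?_, ?_, ?_⟩
  · rw [placeComp_coe (by rw [x1]; rfl : xi 1 = ((1 : K) : WithTop K)), z1]
  · intro x y hx hy
    obtain ⟨a, ha⟩ := WithTop.ne_top_iff_exists.mp (fun h => hx (placeComp_top h))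
    obtain ⟨b, hb⟩ := WithTop.ne_top_iff_exists.mp (fun h => hy (placeComp_top h))
    rw [placeComp_coe ha.symm] at hx ⊢
    rw [placeComp_coe hb.symm] at hy ⊢
    have : xi (x + y) = ((a + b : K) : WithTop K) := by
      rw [xadd x y (by rw [← ha]; exact WithTop.coe_ne_top)
        (by rw [← hb]; exact WithTop.coe_ne_top), ← ha, ← hb, WithTop.coe_add]
    rw [placeComp_coe this, zadd a b hx hy]
  · intro x y hx hy
    obtain ⟨a, ha⟩ := WithTop.ne_top_iff_exists.mp (fun h => hx (placeComp_top h))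
    obtain ⟨b, hb⟩ := WithTop.ne_top_iff_exists.mp (fun h => hy (placeComp_top h))
    rw [placeComp_coe ha.symm] at hx ⊢
    rw [placeComp_coe hb.symm] at hy ⊢
    have : xi (x * y) = ((a * b : K) : WithTop K) := by
      rw [xmul x y (by rw [← ha]; exact WithTop.coe_ne_top)
        (by rw [← hb]; exact WithTop.coe_ne_top), ← ha, ← hb, WithTop.coe_mul]
    rw [placeComp_coe this, zmul a b hx hy]
  · intro x hx
    by_cases hxt : xi x = ⊤
    · obtain ⟨hx0, hi⟩ := xinf x hxt
      refine ⟨hx0, ?_⟩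
      rw [placeComp_coe (by rw [hi]; rfl : xi x⁻¹ = ((0 : K) : WithTop K))]
      exact place_zero hz'
    · obtain ⟨a, ha⟩ := WithTop.ne_top_iff_exists.mp hxt
      rw [placeComp_coe ha.symm] at hx
      have ha0 : a ≠ 0 := by
        rintro rfl
        exact (zinf 0 hx).1 rfl
      obtain ⟨hx0, hi⟩ := place_inv hxi' ha.symm ha0
      refine ⟨hx0, ?_⟩
      rw [placeComp_coe hi]
      exact (zinf a hx).2
end Aux


/-- if `ξ` is a `K`-rational place of `L` (a place of `L` with values in the
subfield `K` which is the identity on `K`), then `ζ ↦ ζ ∘ ξ` is a well-defined, injective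
and continuous map `M(K) → M(L)` compatible with restriction. -/
theorem comp_with_rational_place_embeds {L : Type*} [Field L] (K : Subfield L)
    (xi : L → WithTop ↥K) (hxi : IsPlaceFun xi)
    (htriv : ∀ k : ↥K, xi (k : L) = (k : WithTop ↥K)) :
    ∃ iota : RPlaces ↥K → RPlaces L,
      (∀ zeta : RPlaces ↥K, (iota zeta).1 = placeComp zeta.1 xi) ∧
      Continuous iota ∧ Function.Injective iota ∧
      ∀ (zeta : RPlaces ↥K) (k : ↥K), (iota zeta).1 (k : L) = zeta.1 k := by
  classical
  refine ⟨fun zeta => ⟨placeComp zeta.1 xi, placeComp_isPlaceFun zeta.2 hxi⟩,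
    fun _ => rfl, ?_, ?_, ?_⟩
  · refine continuous_generateFrom_iff.mpr ?_
    rintro U ⟨b, rfl⟩
    by_cases hb : xi b = ⊤
    · convert isOpen_empty
      ext zeta
      simp only [Set.mem_preimage, Hpos, Set.mem_setOf_eq, Set.mem_empty_iff_false,
        iff_false, not_exists]
      intro hm; obtain ⟨r, hr, hrr⟩ : ∃ r : ℝ, 0 < r ∧ placeComp zeta.1 xi b = (r : WithTop ℝ) := hm
      rw [placeComp_top hb] at hrr
      exact WithTop.top_ne_coe hrr
    · obtain ⟨a, ha⟩ := WithTop.ne_top_iff_exists.mp hb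
      have : (fun zeta : RPlaces ↥K => (⟨placeComp zeta.1 xi,
          placeComp_isPlaceFun zeta.2 hxi⟩ : RPlaces L)) ⁻¹' Hpos b = Hpos a := by
        ext zeta
        simp only [Set.mem_preimage, Hpos, Set.mem_setOf_eq]
        change (∃ r : ℝ, 0 < r ∧ placeComp zeta.1 xi b = (r : WithTop ℝ)) ↔ _
        simp only [placeComp_coe ha.symm]
      suffices h2 : IsOpen (Hpos a) by rw [← this] at h2; exact h2
      exact TopologicalSpace.isOpen_generateFrom_of_mem ⟨a, rfl⟩
  · intro z1 z2 h
    apply Subtype.ext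
    funext a
    have := congrFun (congrArg (fun w : RPlaces L => w.1) h) (a : L)
    simpa only [placeComp_coe (htriv a)] using this
  · intro zeta k
    exact placeComp_coe (htriv k)
end

section
/- For every pair $(a_1, a_2) \in \R^2$ and every pair $(r_1, r_2)$ of real numbers that are linearly independent over $\Q$, there exists a unique $\R$-place $\xi$ of the rational function field $\R(x_1, x_2)$ whose associated valuation $v$ satisfies $v(x_1 - a_1) = r_1$ and $v(x_2 - a_2) = r_2$; the value group of this valuation is $\Z r_1 + \Z r_2 \subseteq \R$, hence archimedean. Consequently, for fixed $(a_1,a_2)$ there are infinitely many distinct $\R$-places $\xi$ of $\R(x_1,x_2)$ with $\xi(x_1)=a_1$ and $\xi(x_2)=a_2$. -/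
open Set

noncomputable section

/-- The rational function field `ℝ(x₁,x₂)`. -/
abbrev RFF : Type := FractionRing (MvPolynomial (Fin 2) ℝ)

/-- The variable `xᵢ` as an element of `ℝ(x₁,x₂)`. -/
def xvar (i : Fin 2) : RFF := algebraMap (MvPolynomial (Fin 2) ℝ) RFF (MvPolynomial.X i)

/-- A real constant as an element of `ℝ(x₁,x₂)`. -/
def cst (r : ℝ) : RFF := algebraMap (MvPolynomial (Fin 2) ℝ) RFF (MvPolynomial.C r)

/-- The multiplicative value group `ℝ` (with zero adjoined): the additive value `r ∈ ℝ`
corresponds to the multiplicative value `ofAdd (-r)`. -/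
abbrev GammaR : Type := WithZero (Multiplicative ℝ)

/-- An additive real value as an element of the multiplicative value group. -/
def toVal (r : ℝ) : GammaR := ((Multiplicative.ofAdd (-r) : Multiplicative ℝ) : GammaR)

/-- The condition on a valuation `v` of `ℝ(x₁,x₂)` with values in `ℝ`: it extends the
trivial valuation on `ℝ` and satisfies `v(x₁-a₁) = r₁`, `v(x₂-a₂) = r₂` (additively). -/
def ValCond (a1 a2 r1 r2 : ℝ) (v : Valuation RFF GammaR) : Prop :=
  (∀ c : ℝ, c ≠ 0 → v (cst c) = 1) ∧
  v (xvar 0 - cst a1) = toVal r1 ∧ v (xvar 1 - cst a2) = toVal r2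

abbrev HS : Type := HahnSeries ℝ ℝ

theorem toVal_mul (x y : ℝ) : toVal (x + y) = toVal x * toVal y := by
  rw [toVal, toVal, toVal, ← WithZero.coe_mul, ← ofAdd_add, neg_add]
theorem toVal_zero' : toVal 0 = 1 := by simp [toVal]
theorem toVal_ne_zero (x : ℝ) : toVal x ≠ 0 := WithZero.coe_ne_zero
theorem toVal_inj {x y : ℝ} (h : toVal x = toVal y) : x = y := by
  have := WithZero.coe_inj.mp h
  simpa using Multiplicative.ofAdd.injective this
theorem toVal_pow (x : ℝ) (n : ℕ) : toVal x ^ n = toVal (n * x) := by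
  rw [toVal, toVal, ← WithZero.coe_pow, ← ofAdd_nsmul, nsmul_eq_mul, mul_neg]
theorem toVal_inv (x : ℝ) : (toVal x)⁻¹ = toVal (-x) := by
  rw [toVal, toVal, ← WithZero.coe_inv, ← ofAdd_neg, neg_neg]
theorem toVal_le_iff {x y : ℝ} : toVal x ≤ toVal y ↔ y ≤ x := by
  rw [toVal, toVal, WithZero.coe_le_coe, Multiplicative.ofAdd_le, neg_le_neg_iff]

open scoped Classical in
def hvf (s : HS) : GammaR := if s = 0 then 0 else toVal s.order
theorem hvf_of_ne {s : HS} (h : s ≠ 0) : hvf s = toVal s.order := if_neg h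
theorem hvf_zero : hvf 0 = 0 := if_pos rfl

open HahnSeries in
def hval : Valuation HS GammaR where
  toFun := hvf
  map_zero' := hvf_zero
  map_one' := by show hvf 1 = 1; rw [hvf_of_ne one_ne_zero, order_one, toVal_zero']
  map_mul' x y := by
    show hvf (x * y) = hvf x * hvf y
    by_cases hx : x = 0
    · simp only [hx, zero_mul, hvf_zero, mul_comm]; rw [mul_comm]; simp [hvf_zero]
    by_cases hy : y = 0
    · simp [hy, hvf_zero]
    rw [hvf_of_ne (mul_ne_zero hx hy), hvf_of_ne hx, hvf_of_ne hy, order_mul hx hy, toVal_mul]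
  map_add_le_max' x y := by
    show hvf (x + y) ≤ max (hvf x) (hvf y)
    by_cases hxy : x + y = 0
    · simp [hxy, hvf_zero]
    by_cases hx : x = 0
    · simp [hx, le_max_right]
    by_cases hy : y = 0
    · simp [hy, le_max_left]
    rw [hvf_of_ne hxy, hvf_of_ne hx, hvf_of_ne hy]
    have h := min_order_le_order_add (R := ℝ) hxy
    rcases min_cases x.order y.order with ⟨he, _⟩ | ⟨he, _⟩
    · exact le_max_of_le_left (toVal_le_iff.mpr (he ▸ h))
    · exact le_max_of_le_right (toVal_le_iff.mpr (he ▸ h))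

theorem hval_of_ne {s : HS} (h : s ≠ 0) : hval s = toVal s.order := if_neg h
theorem hval_single {u : ℝ} {c : ℝ} (hc : c ≠ 0) : hval (HahnSeries.single u c) = toVal u := by
  rw [hval_of_ne (HahnSeries.single_ne_zero hc), HahnSeries.order_single hc]

theorem val_sum {K : Type*} [CommRing K] (v : Valuation K GammaR) {ι : Type*}
    (s : Finset ι) (f : ι → K)
    (hdist : ∀ d ∈ s, ∀ e ∈ s, d ≠ e → v (f d) ≠ v (f e)) :
    v (∑ d ∈ s, f d) = s.sup (fun d => v (f d)) := by
  classical
  induction s using Finset.induction_on with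
  | empty => rw [Finset.sum_empty, Finset.sup_empty, map_zero]; rfl
  | @insert a s ha ih =>
    have hd' : ∀ d ∈ s, ∀ e ∈ s, d ≠ e → v (f d) ≠ v (f e) := fun d hd e he =>
      hdist d (Finset.mem_insert_of_mem hd) e (Finset.mem_insert_of_mem he)
    rw [Finset.sum_insert ha, Finset.sup_insert]
    rcases s.eq_empty_or_nonempty with rfl | hne
    · rw [Finset.sum_empty, add_zero, Finset.sup_empty, sup_of_le_left bot_le]
    · obtain ⟨b, hb, hsup⟩ := Finset.exists_mem_eq_sup s hne (fun d => v (f d))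
      have hne' : v (f a) ≠ v (∑ d ∈ s, f d) := by
        rw [ih hd', hsup]
        exact hdist a (Finset.mem_insert_self a s) b (Finset.mem_insert_of_mem hb)
          (fun h => ha (h ▸ hb))
      rw [Valuation.map_add_of_distinct_val v hne', ih hd']

abbrev A2 : Type := MvPolynomial (Fin 2) ℝ

open MvPolynomial

def wfun (r : Fin 2 → ℝ) (d : Fin 2 →₀ ℕ) : ℝ := (d 0 : ℝ) * r 0 + (d 1 : ℝ) * r 1

theorem wfun_inj {r : Fin 2 → ℝ}
    (hr : ∀ m n : ℤ, (m : ℝ) * r 0 + (n : ℝ) * r 1 = 0 → m = 0 ∧ n = 0)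
    {d e : Fin 2 →₀ ℕ} (h : wfun r d = wfun r e) : d = e := by
  obtain ⟨h0, h1⟩ := hr ((d 0 : ℤ) - (e 0 : ℤ)) ((d 1 : ℤ) - (e 1 : ℤ))
    (by unfold wfun at h; push_cast; linarith)
  ext i
  fin_cases i
  · show d 0 = e 0; omega
  · show d 1 = e 1; omega

theorem aeval_expand {S : Type*} [CommRing S] [Algebra ℝ S] (g : Fin 2 → S) (q : A2) :
    MvPolynomial.aeval g q
      = ∑ d ∈ q.support, algebraMap ℝ S (q.coeff d) * (g 0 ^ d 0 * g 1 ^ d 1) := by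
  rw [aeval_def, eval₂_eq']
  exact Finset.sum_congr rfl fun d _ => by rw [Fin.prod_univ_two]

/-- the generic valuation-of-polynomial computation -/
theorem val_aeval {K : Type*} [CommRing K] [Algebra ℝ K] (v : Valuation K GammaR)
    (hv0 : ∀ c : ℝ, c ≠ 0 → v (algebraMap ℝ K c) = 1)
    (y : Fin 2 → K) (r : Fin 2 → ℝ) (hy : ∀ i, v (y i) = toVal (r i))
    (hr : ∀ m n : ℤ, (m : ℝ) * r 0 + (n : ℝ) * r 1 = 0 → m = 0 ∧ n = 0)
    (q : A2) :
    v (MvPolynomial.aeval y q) = q.support.sup (fun d => toVal (wfun r d)) := by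
  have hterm : ∀ d ∈ q.support,
      v (algebraMap ℝ K (q.coeff d) * (y 0 ^ d 0 * y 1 ^ d 1)) = toVal (wfun r d) := by
    intro d hd
    rw [map_mul, map_mul, map_pow, map_pow, hv0 _ (mem_support_iff.mp hd), hy, hy,
      one_mul, toVal_pow, toVal_pow, ← toVal_mul]
    rfl
  rw [_root_.aeval_expand, val_sum]
  · exact Finset.sup_congr rfl hterm
  · intro d hd e he hde hveq
    rw [hterm d hd, hterm e he] at hveq
    exact hde (wfun_inj hr (toVal_inj hveq))

theorem sup_ne_zero {r : Fin 2 → ℝ} {q : A2} (hq : q ≠ 0) :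
    ∃ d ∈ q.support, q.support.sup (fun d => toVal (wfun r d)) = toVal (wfun r d) := by
  have hne : q.support.Nonempty :=
    Finset.nonempty_iff_ne_empty.mpr (fun h => hq (support_eq_empty.mp h))
  obtain ⟨d, hd, h⟩ := Finset.exists_mem_eq_sup q.support hne (fun d => toVal (wfun r d))
  exact ⟨d, hd, h⟩

theorem algebraMap_HS (c : ℝ) : algebraMap ℝ HS c = HahnSeries.C c := by
  rw [HahnSeries.algebraMap_apply', PowerSeries.algebraMap_apply, Algebra.algebraMap_self_apply,
    HahnSeries.ofPowerSeries_C]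

theorem hval_algebraMap {c : ℝ} (hc : c ≠ 0) : hval (algebraMap ℝ HS c) = 1 := by
  rw [algebraMap_HS, HahnSeries.C_apply, hval_single hc, toVal_zero']

def shiftP (a : Fin 2 → ℝ) : A2 →ₐ[ℝ] A2 := aeval (fun i => X i + C (a i))

theorem shiftP_inj (a : Fin 2 → ℝ) : Function.Injective (shiftP a) := by
  have hcomp : (shiftP (fun i => -(a i))).comp (shiftP a) = AlgHom.id ℝ A2 := by
    apply MvPolynomial.algHom_ext
    intro i
    simp only [shiftP, AlgHom.coe_comp, Function.comp_apply, aeval_X, map_add, aeval_C,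
      MvPolynomial.algebraMap_eq, AlgHom.coe_id, id_eq]
    rw [add_assoc, ← C_add, neg_add_cancel, C_0, add_zero]
  intro p q h
  have h2 := congrArg (shiftP (fun i => -(a i))) h
  rwa [← AlgHom.comp_apply, ← AlgHom.comp_apply, hcomp, AlgHom.coe_id, id_eq, id_eq] at h2

def phiH (a r : Fin 2 → ℝ) : A2 →ₐ[ℝ] HS :=
  aeval (fun i => HahnSeries.single (r i) 1 + HahnSeries.C (a i))

theorem phiH_eq (a r : Fin 2 → ℝ) (p : A2) :
    phiH a r p = aeval (fun i => (HahnSeries.single (r i) 1 : HS)) (shiftP a p) := by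
  have hcomp : (aeval (fun i => (HahnSeries.single (r i) 1 : HS))).comp (shiftP a)
      = phiH a r := by
    apply MvPolynomial.algHom_ext
    intro i
    simp only [phiH, AlgHom.coe_comp, Function.comp_apply, aeval_X, map_add, aeval_C, shiftP]
    rw [algebraMap_HS]
  rw [← hcomp, AlgHom.comp_apply]

theorem hval_phiH (a r : Fin 2 → ℝ)
    (hr : ∀ m n : ℤ, (m : ℝ) * r 0 + (n : ℝ) * r 1 = 0 → m = 0 ∧ n = 0) (p : A2) :
    hval (phiH a r p) = (shiftP a p).support.sup (fun d => toVal (wfun r d)) := by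
  rw [phiH_eq]
  exact val_aeval hval (fun c hc => hval_algebraMap hc) _ r
    (fun i => hval_single one_ne_zero) hr _

theorem phiH_inj (a r : Fin 2 → ℝ)
    (hr : ∀ m n : ℤ, (m : ℝ) * r 0 + (n : ℝ) * r 1 = 0 → m = 0 ∧ n = 0) :
    Function.Injective (phiH a r) := by
  rw [injective_iff_map_eq_zero]
  intro p hp
  by_contra hp0
  have hq : shiftP a p ≠ 0 := fun h => hp0 (shiftP_inj a (by rw [h, map_zero]))
  obtain ⟨d, _, hsup⟩ := sup_ne_zero (r := r) hq
  have := hval_phiH a r hr p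
  rw [hp, map_zero, hsup] at this
  exact toVal_ne_zero _ this.symm

def embH (a r : Fin 2 → ℝ)
    (hr : ∀ m n : ℤ, (m : ℝ) * r 0 + (n : ℝ) * r 1 = 0 → m = 0 ∧ n = 0) : RFF →+* HS :=
  IsFractionRing.lift (g := (phiH a r).toRingHom) (phiH_inj a r hr)

theorem embH_alg (a r : Fin 2 → ℝ) (hr : ∀ m n : ℤ, (m : ℝ) * r 0 + (n : ℝ) * r 1 = 0 → m = 0 ∧ n = 0)
    (p : A2) : embH a r hr (algebraMap A2 RFF p) = phiH a r p :=
  IsFractionRing.lift_algebraMap _ _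

theorem cst_eq_algebraMap (c : ℝ) : algebraMap ℝ RFF c = cst c := by
  rw [IsScalarTower.algebraMap_apply ℝ A2 RFF, MvPolynomial.algebraMap_eq, cst]

def v0 (a r : Fin 2 → ℝ)
    (hr : ∀ m n : ℤ, (m : ℝ) * r 0 + (n : ℝ) * r 1 = 0 → m = 0 ∧ n = 0) :
    Valuation RFF GammaR := hval.comap (embH a r hr)

theorem v0_cst (a r : Fin 2 → ℝ) (hr : ∀ m n : ℤ, (m : ℝ) * r 0 + (n : ℝ) * r 1 = 0 → m = 0 ∧ n = 0)
    {c : ℝ} (hc : c ≠ 0) : v0 a r hr (cst c) = 1 := by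
  show hval (embH a r hr (cst c)) = 1
  rw [cst, embH_alg, ← MvPolynomial.algebraMap_eq, AlgHom.commutes, hval_algebraMap hc]

theorem phiH_C (a r : Fin 2 → ℝ) (c : ℝ) : phiH a r (C c) = HahnSeries.C c := by
  rw [← MvPolynomial.algebraMap_eq, AlgHom.commutes, algebraMap_HS]

theorem embH_sub (a r : Fin 2 → ℝ) (hr : ∀ m n : ℤ, (m : ℝ) * r 0 + (n : ℝ) * r 1 = 0 → m = 0 ∧ n = 0)
    (i : Fin 2) : embH a r hr (xvar i - cst (a i)) = HahnSeries.single (r i) 1 := by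
  rw [xvar, cst, ← map_sub, embH_alg, map_sub, phiH_C, phiH, aeval_X, add_sub_cancel_right]

theorem v0_xvar (a r : Fin 2 → ℝ) (hr : ∀ m n : ℤ, (m : ℝ) * r 0 + (n : ℝ) * r 1 = 0 → m = 0 ∧ n = 0)
    (i : Fin 2) : v0 a r hr (xvar i - cst (a i)) = toVal (r i) := by
  show hval (embH a r hr (xvar i - cst (a i))) = toVal (r i)
  rw [embH_sub, hval_single one_ne_zero]

/-- any valuation satisfying the conditions has the canonical value on polynomials -/
theorem val_on_algebraMap (a r : Fin 2 → ℝ) (v : Valuation RFF GammaR)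
    (hv0 : ∀ c : ℝ, c ≠ 0 → v (cst c) = 1)
    (hy : ∀ i, v (xvar i - cst (a i)) = toVal (r i))
    (hr : ∀ m n : ℤ, (m : ℝ) * r 0 + (n : ℝ) * r 1 = 0 → m = 0 ∧ n = 0) (p : A2) :
    v (algebraMap A2 RFF p) = (shiftP a p).support.sup (fun d => toVal (wfun r d)) := by
  have hcomp : (aeval (fun i => xvar i - cst (a i))).comp (shiftP a)
      = IsScalarTower.toAlgHom ℝ A2 RFF := by
    apply MvPolynomial.algHom_ext
    intro i
    simp only [AlgHom.coe_comp, Function.comp_apply, shiftP, aeval_X, map_add, aeval_C,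
      IsScalarTower.coe_toAlgHom']
    rw [cst_eq_algebraMap, sub_add_cancel, xvar]
  have key : algebraMap A2 RFF p = aeval (fun i => xvar i - cst (a i)) (shiftP a p) := by
    rw [← AlgHom.comp_apply, hcomp, IsScalarTower.coe_toAlgHom']
  rw [key]
  exact val_aeval v (fun c hc => by rw [cst_eq_algebraMap]; exact hv0 c hc) _ r hy hr _

theorem val_unique (a r : Fin 2 → ℝ) (v v' : Valuation RFF GammaR)
    (hv0 : ∀ c : ℝ, c ≠ 0 → v (cst c) = 1)
    (hy : ∀ i, v (xvar i - cst (a i)) = toVal (r i))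
    (hv0' : ∀ c : ℝ, c ≠ 0 → v' (cst c) = 1)
    (hy' : ∀ i, v' (xvar i - cst (a i)) = toVal (r i))
    (hr : ∀ m n : ℤ, (m : ℝ) * r 0 + (n : ℝ) * r 1 = 0 → m = 0 ∧ n = 0) : v = v' := by
  apply DFunLike.ext
  intro f
  obtain ⟨⟨p, s⟩, hps⟩ := IsLocalization.surj (nonZeroDivisors A2) f
  simp only at hps
  have hs0 : algebraMap A2 RFF (s : A2) ≠ 0 :=
    IsFractionRing.to_map_ne_zero_of_mem_nonZeroDivisors s.2
  by_cases hp : p = 0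
  · have hf : f = 0 := by
      rcases mul_eq_zero.mp (by rw [hps, hp, map_zero]) with h | h
      · exact h
      · exact absurd h hs0
    rw [hf, map_zero, map_zero]
  · have hsne : (s : A2) ≠ 0 := nonZeroDivisors.ne_zero s.2
    have hshift : shiftP a (s : A2) ≠ 0 := fun h => hsne (shiftP_inj a (by rw [h, map_zero]))
    obtain ⟨e, _, hesup⟩ := sup_ne_zero (r := r) hshift
    have hvs : v (algebraMap A2 RFF (s : A2)) = toVal (wfun r e) := by
      rw [val_on_algebraMap a r v hv0 hy hr, hesup]
    have hvs' : v' (algebraMap A2 RFF (s : A2)) = toVal (wfun r e) := by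
      rw [val_on_algebraMap a r v' hv0' hy' hr, hesup]
    have hA : v f * toVal (wfun r e) = (shiftP a p).support.sup (fun d => toVal (wfun r d)) := by
      rw [← hvs, ← map_mul, hps, val_on_algebraMap a r v hv0 hy hr]
    have hB : v' f * toVal (wfun r e) = (shiftP a p).support.sup (fun d => toVal (wfun r d)) := by
      rw [← hvs', ← map_mul, hps, val_on_algebraMap a r v' hv0' hy' hr]
    have h1 : v f * toVal (wfun r e) = v' f * toVal (wfun r e) := hA.trans hB.symm
    exact mul_right_cancel₀ (toVal_ne_zero _) h1

theorem val_repr (a r : Fin 2 → ℝ) (v : Valuation RFF GammaR)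
    (hv0 : ∀ c : ℝ, c ≠ 0 → v (cst c) = 1)
    (hy : ∀ i, v (xvar i - cst (a i)) = toVal (r i))
    (hr : ∀ m n : ℤ, (m : ℝ) * r 0 + (n : ℝ) * r 1 = 0 → m = 0 ∧ n = 0)
    (f : RFF) (hf : f ≠ 0) :
    ∃ m n : ℤ, v f = toVal ((m : ℝ) * r 0 + (n : ℝ) * r 1) := by
  obtain ⟨⟨p, s⟩, hps⟩ := IsLocalization.surj (nonZeroDivisors A2) f
  simp only at hps
  have hs0 : algebraMap A2 RFF (s : A2) ≠ 0 :=
    IsFractionRing.to_map_ne_zero_of_mem_nonZeroDivisors s.2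
  have hsne : (s : A2) ≠ 0 := nonZeroDivisors.ne_zero s.2
  have hp : p ≠ 0 := by
    intro h
    apply hf
    rcases mul_eq_zero.mp (by rw [hps, h, map_zero]) with h' | h'
    · exact h'
    · exact absurd h' hs0
  have hshiftp : shiftP a p ≠ 0 := fun h => hp (shiftP_inj a (by rw [h, map_zero]))
  have hshifts : shiftP a (s : A2) ≠ 0 := fun h => hsne (shiftP_inj a (by rw [h, map_zero]))
  obtain ⟨d, _, hdsup⟩ := sup_ne_zero (r := r) hshiftp
  obtain ⟨e, _, hesup⟩ := sup_ne_zero (r := r) hshifts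
  have hvp : v (algebraMap A2 RFF p) = toVal (wfun r d) := by
    rw [val_on_algebraMap a r v hv0 hy hr, hdsup]
  have hvs : v (algebraMap A2 RFF (s : A2)) = toVal (wfun r e) := by
    rw [val_on_algebraMap a r v hv0 hy hr, hesup]
  refine ⟨(d 0 : ℤ) - (e 0 : ℤ), (d 1 : ℤ) - (e 1 : ℤ), ?_⟩
  have h1 : v f * toVal (wfun r e) = toVal (wfun r d) := by
    rw [← hvs, ← map_mul, hps, hvp]
  have h2 : v f = toVal (wfun r d) * (toVal (wfun r e))⁻¹ :=
    (eq_mul_inv_iff_mul_eq₀ (toVal_ne_zero _)).mpr h1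
  rw [h2, toVal_inv, ← toVal_mul]
  congr 1
  unfold wfun
  push_cast
  ring

def good (s : HS) : Prop := ∀ g : ℝ, g < 0 → s.coeff g = 0

open scoped Classical in
def zeta (s : HS) : WithTop ℝ := if good s then (s.coeff 0 : WithTop ℝ) else ⊤

theorem zeta_of_good {s : HS} (h : good s) : zeta s = (s.coeff 0 : WithTop ℝ) := if_pos h
theorem zeta_of_bad {s : HS} (h : ¬ good s) : zeta s = ⊤ := if_neg h
theorem zeta_ne_top_iff {s : HS} : zeta s ≠ ⊤ ↔ good s := by
  constructor
  · intro h; by_contra hg; exact h (zeta_of_bad hg)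
  · intro h; rw [zeta_of_good h]; exact WithTop.coe_ne_top

theorem good_support {s : HS} (h : good s) : ∀ g ∈ s.support, (0:ℝ) ≤ g := by
  intro g hg
  by_contra hlt
  exact (HahnSeries.mem_support s g).mp hg (h g (lt_of_not_ge hlt))

theorem mul_coeff_zero_aux {s t : HS} (hs : ∀ g ∈ s.support, (0:ℝ) < g)
    (ht : ∀ g ∈ t.support, (0:ℝ) ≤ g) : (s * t).coeff 0 = 0 := by
  by_contra h
  have h0 : (0:ℝ) ∈ (s * t).support := (HahnSeries.mem_support _ _).mpr h
  obtain ⟨g, hg, h', hh, hsum⟩ := Set.mem_add.mp (HahnSeries.support_mul_subset h0)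
  have := hs g hg
  have := ht h' hh
  linarith

theorem good_mul {s t : HS} (hs : good s) (ht : good t) :
    good (s * t) ∧ (s * t).coeff 0 = s.coeff 0 * t.coeff 0 := by
  constructor
  · intro g hg
    by_contra h
    obtain ⟨g1, hg1, g2, hg2, hsum⟩ :=
      Set.mem_add.mp (HahnSeries.support_mul_subset ((HahnSeries.mem_support _ _).mpr h))
    have := good_support hs g1 hg1
    have := good_support ht g2 hg2
    linarith
  · set c := s.coeff 0 with hc
    set d := t.coeff 0 with hd
    have hs' : ∀ g ∈ (s - HahnSeries.C c).support, (0:ℝ) < g := by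
      intro g hg
      have hne := (HahnSeries.mem_support _ _).mp hg
      rcases lt_trichotomy g 0 with h | h | h
      · exfalso
        apply hne
        rw [HahnSeries.coeff_sub, hs g h, HahnSeries.C_apply,
          HahnSeries.coeff_single_of_ne (ne_of_lt h), sub_zero]
      · exfalso
        apply hne
        rw [HahnSeries.coeff_sub, h, HahnSeries.C_apply, HahnSeries.coeff_single_same, hc, sub_self]
      · exact h
    have ht' : ∀ g ∈ t.support, (0:ℝ) ≤ g := good_support ht
    have key : s * t = HahnSeries.C c * t + (s - HahnSeries.C c) * t := by ring
    rw [key, HahnSeries.coeff_add, mul_coeff_zero_aux hs' ht', add_zero]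
    rw [HahnSeries.C_mul_eq_smul, HahnSeries.coeff_smul, hd, smul_eq_mul]

theorem good_zero : good 0 := fun g _ => rfl
theorem good_one : good 1 := by
  intro g hg
  rw [HahnSeries.coeff_one]
  simp [ne_of_lt hg]

theorem zeta_place (L : Type*) [Field L] (e : L →+* HS) : IsPlaceFun (fun f => zeta (e f)) := by
  refine ⟨?_, ?_, ?_, ?_⟩
  · show zeta (e 1) = 1
    rw [map_one, zeta_of_good good_one, HahnSeries.coeff_one]
    simp
  · intro x y hx hy
    show zeta (e (x + y)) = zeta (e x) + zeta (e y)
    have gx : good (e x) := zeta_ne_top_iff.mp hx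
    have gy : good (e y) := zeta_ne_top_iff.mp hy
    have gxy : good (e (x + y)) := by
      rw [map_add]
      intro g hg
      rw [HahnSeries.coeff_add, gx g hg, gy g hg, add_zero]
    rw [zeta_of_good gxy, zeta_of_good gx, zeta_of_good gy, map_add, HahnSeries.coeff_add]
    rw [← WithTop.coe_add]
  · intro x y hx hy
    show zeta (e (x * y)) = zeta (e x) * zeta (e y)
    have gx : good (e x) := zeta_ne_top_iff.mp hx
    have gy : good (e y) := zeta_ne_top_iff.mp hy
    obtain ⟨g1, g2⟩ := good_mul gx gy
    rw [map_mul, zeta_of_good g1, zeta_of_good gx, zeta_of_good gy, g2, ← WithTop.coe_mul]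
  · intro x hx
    replace hx : zeta (e x) = ⊤ := hx
    have hbad : ¬ good (e x) := by
      intro h; rw [zeta_of_good h] at hx; exact WithTop.coe_ne_top hx
    obtain ⟨g, hgneg, hgne⟩ : ∃ g : ℝ, g < 0 ∧ (e x).coeff g ≠ 0 := by
      by_contra h
      push_neg at h
      exact hbad fun g hg => h g hg
    have hex : e x ≠ 0 := by
      intro h
      rw [h] at hgne
      exact hgne rfl
    have hx0 : x ≠ 0 := by
      intro h
      rw [h, map_zero] at hex
      exact hex rfl
    refine ⟨hx0, ?_⟩
    show zeta (e x⁻¹) = 0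
    have hord : (e x).order ≤ g := HahnSeries.order_le_of_coeff_ne_zero hgne
    have hinv : e x⁻¹ = (e x)⁻¹ := map_inv₀ e x
    have hinvne : (e x)⁻¹ ≠ 0 := inv_ne_zero hex
    have hordinv : (e x)⁻¹.order = -(e x).order := by
      have h1 : e x * (e x)⁻¹ = 1 := mul_inv_cancel₀ hex
      have h2 := HahnSeries.order_mul hex hinvne
      rw [h1, HahnSeries.order_one] at h2
      linarith
    have hpos : (0:ℝ) < ((e x)⁻¹).order := by rw [hordinv]; linarith
    have ginv : good ((e x)⁻¹) := fun g' hg' =>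
      HahnSeries.coeff_eq_zero_of_lt_order (by linarith)
    rw [hinv, zeta_of_good ginv,
      HahnSeries.coeff_eq_zero_of_lt_order hpos]
    rfl

theorem zeta_single_pos {u : ℝ} (hu : 0 < u) : zeta (HahnSeries.single u 1 : HS) = ((0:ℝ) : WithTop ℝ) := by
  have hg : good (HahnSeries.single u 1 : HS) := by
    intro g hg
    exact HahnSeries.coeff_single_of_ne (by linarith : g ≠ u)
  rw [zeta_of_good hg, HahnSeries.coeff_single_of_ne (by linarith : (0:ℝ) ≠ u)]

theorem zeta_single_neg {u : ℝ} (hu : u < 0) : zeta (HahnSeries.single u 1 : HS) = ⊤ := by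
  apply zeta_of_bad
  intro h
  have := h u hu
  rw [HahnSeries.coeff_single_same] at this
  exact one_ne_zero this

theorem xi_xvar (a r : Fin 2 → ℝ)
    (hr : ∀ m n : ℤ, (m : ℝ) * r 0 + (n : ℝ) * r 1 = 0 → m = 0 ∧ n = 0)
    (hpos : ∀ i, 0 < r i) (i : Fin 2) :
    zeta (embH a r hr (xvar i)) = ((a i : ℝ) : WithTop ℝ) := by
  have h1 : embH a r hr (xvar i) = HahnSeries.single (r i) 1 + HahnSeries.C (a i) := by
    rw [xvar, embH_alg, phiH, aeval_X]
  rw [h1]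
  have hg : good (HahnSeries.single (r i) 1 + HahnSeries.C (a i)) := by
    intro g hg
    rw [HahnSeries.coeff_add, HahnSeries.coeff_single_of_ne (by have := hpos i; intro h; linarith),
      HahnSeries.C_apply, HahnSeries.coeff_single_of_ne (ne_of_lt hg), add_zero]
  rw [zeta_of_good hg, HahnSeries.coeff_add,
    HahnSeries.coeff_single_of_ne (by have := hpos i; intro h; linarith : (0:ℝ) ≠ r i),
    HahnSeries.C_apply, HahnSeries.coeff_single_same, zero_add]

theorem inv_single_one : (HahnSeries.single (1:ℝ) (1:ℝ) : HS)⁻¹ = HahnSeries.single (-1 : ℝ) 1 := by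
  apply inv_eq_of_mul_eq_one_right
  rw [HahnSeries.single_mul_single, add_neg_cancel, one_mul, HahnSeries.single_zero_one]

theorem embH_gn (a r : Fin 2 → ℝ)
    (hr : ∀ m n : ℤ, (m : ℝ) * r 0 + (n : ℝ) * r 1 = 0 → m = 0 ∧ n = 0)
    (hr0 : r 0 = 1) (n : ℕ) :
    embH a r hr ((xvar 1 - cst (a 1)) * ((xvar 0 - cst (a 0))⁻¹)^n)
      = HahnSeries.single (r 1 - n) 1 := by
  rw [map_mul, map_pow, map_inv₀, embH_sub, embH_sub, hr0, inv_single_one,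
    HahnSeries.single_pow, one_pow, HahnSeries.single_mul_single, one_mul]
  congr 1
  rw [nsmul_eq_mul, mul_neg_one, sub_eq_add_neg]


theorem sqrt2_indep (k : ℕ) :
    ∀ m n : ℤ, (m : ℝ) * (![1, (k:ℝ) + Real.sqrt 2] 0) + (n : ℝ) * (![1, (k:ℝ) + Real.sqrt 2] 1) = 0
      → m = 0 ∧ n = 0 := by
  intro m n h
  simp only [Matrix.cons_val_zero, Matrix.cons_val_one, Matrix.head_cons, mul_one] at h
  have hn : n = 0 := by
    by_contra hn
    have hnR : (n:ℝ) ≠ 0 := Int.cast_ne_zero.mpr hn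
    apply irrational_sqrt_two
    refine ⟨((-m - n * k : ℤ) : ℚ) / (n : ℚ), ?_⟩
    push_cast
    field_simp
    linarith
  subst hn
  refine ⟨?_, rfl⟩
  have : (m:ℝ) = 0 := by push_cast at h; linarith
  exact_mod_cast this

/-- for rationally independent `r₁, r₂ ∈ ℝ` there is a unique valuation of
`ℝ(x₁,x₂)` with real values, trivial on `ℝ`, with `v(xᵢ-aᵢ) = rᵢ`; its value group is
`ℤr₁ + ℤr₂ ⊆ ℝ` (hence archimedean); consequently there are infinitely many `ℝ`-places
`ξ` of `ℝ(x₁,x₂)` with `ξ(x₁) = a₁` and `ξ(x₂) = a₂`. -/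
theorem monomial_valuations (a1 a2 r1 r2 : ℝ)
    (hind : ∀ m n : ℤ, (m : ℝ) * r1 + (n : ℝ) * r2 = 0 → m = 0 ∧ n = 0) :
    (∃! v : Valuation RFF GammaR, ValCond a1 a2 r1 r2 v) ∧
    (∀ v : Valuation RFF GammaR, ValCond a1 a2 r1 r2 v →
      ∀ f : RFF, f ≠ 0 → ∃ m n : ℤ, v f = toVal ((m : ℝ) * r1 + (n : ℝ) * r2)) ∧
    {xi : RFF → WithTop ℝ | IsPlaceFun xi ∧
      xi (xvar 0) = ((a1 : ℝ) : WithTop ℝ) ∧ xi (xvar 1) = ((a2 : ℝ) : WithTop ℝ)}.Infinite := by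
  have hr : ∀ m n : ℤ, (m : ℝ) * (![r1, r2] : Fin 2 → ℝ) 0 + (n : ℝ) * (![r1, r2] : Fin 2 → ℝ) 1 = 0
      → m = 0 ∧ n = 0 := by
    intro m n h
    apply hind m n
    simpa using h
  set a : Fin 2 → ℝ := ![a1, a2] with ha
  set r : Fin 2 → ℝ := ![r1, r2] with hrr
  have hVC : ∀ v : Valuation RFF GammaR, ValCond a1 a2 r1 r2 v ↔
      ((∀ c : ℝ, c ≠ 0 → v (cst c) = 1) ∧ ∀ i, v (xvar i - cst (a i)) = toVal (r i)) := by
    intro v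
    constructor
    · rintro ⟨h0, h1, h2⟩
      refine ⟨h0, fun i => ?_⟩
      fin_cases i
      · simpa [ha, hrr] using h1
      · simpa [ha, hrr] using h2
    · rintro ⟨h0, h⟩
      exact ⟨h0, by simpa [ha, hrr] using h 0, by simpa [ha, hrr] using h 1⟩
  refine ⟨⟨v0 a r hr, ?_, ?_⟩, ?_, ?_⟩
  · exact (hVC _).mpr ⟨fun c hc => v0_cst a r hr hc, v0_xvar a r hr⟩
  · intro v hv
    rw [hVC] at hv
    exact val_unique a r v (v0 a r hr) hv.1 hv.2
      (fun c hc => v0_cst a r hr hc) (v0_xvar a r hr) hr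
  · intro v hv f hf
    rw [hVC] at hv
    obtain ⟨m, n, hmn⟩ := val_repr a r v hv.1 hv.2 hr f hf
    exact ⟨m, n, by simpa [hrr] using hmn⟩
  · -- infinitude of places
    have h2sq : Real.sqrt 2 ^ 2 = 2 := Real.sq_sqrt (by norm_num)
    have h2nn : (0:ℝ) ≤ Real.sqrt 2 := Real.sqrt_nonneg 2
    have h2gt1 : (1:ℝ) < Real.sqrt 2 := by nlinarith
    have h2lt2 : Real.sqrt 2 < 2 := by nlinarith
    set rk : ℕ → Fin 2 → ℝ := fun k => ![1, (k:ℝ) + Real.sqrt 2] with hrk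
    have hk : ∀ k : ℕ, ∀ m n : ℤ, (m:ℝ) * rk k 0 + (n:ℝ) * rk k 1 = 0 → m = 0 ∧ n = 0 :=
      fun k => sqrt2_indep k
    set F : ℕ → (RFF → WithTop ℝ) := fun k => (fun f => zeta (embH a (rk k) (hk k) f)) with hF
    have hgn : ∀ k l : ℕ, F k ((xvar 1 - cst (a 1)) * ((xvar 0 - cst (a 0))⁻¹)^l)
        = zeta (HahnSeries.single ((k:ℝ) + Real.sqrt 2 - l) 1) := by
      intro k l
      show zeta (embH a (rk k) (hk k) ((xvar 1 - cst (a 1)) * ((xvar 0 - cst (a 0))⁻¹)^l)) = _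
      rw [embH_gn a (rk k) (hk k) (by simp [hrk]) l]
      simp [hrk]
    have hkey : ∀ k l : ℕ, k < l → F k ≠ F l := by
      intro k l hlt heq
      have h1 := congrFun heq ((xvar 1 - cst (a 1)) * ((xvar 0 - cst (a 0))⁻¹)^(l+1))
      rw [hgn k (l+1), hgn l (l+1)] at h1
      have hklR : (k:ℝ) + 1 ≤ (l:ℝ) := by exact_mod_cast hlt
      rw [zeta_single_neg (by push_cast; linarith)] at h1
      rw [zeta_single_pos (by push_cast; linarith)] at h1
      exact absurd h1 (by simp)
    apply Set.infinite_of_injective_forall_mem (f := F)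
    · intro k l hkl
      by_contra hne
      rcases Nat.lt_or_ge k l with h | h
      · exact hkey k l h hkl
      · exact hkey l k (lt_of_le_of_ne h (Ne.symm hne)) hkl.symm
    · intro k
      have hpos : ∀ i, 0 < rk k i := by
        intro i
        have hk0 : (0:ℝ) ≤ (k:ℝ) := Nat.cast_nonneg k
        fin_cases i
        · show (0:ℝ) < 1
          norm_num
        · show (0:ℝ) < (k:ℝ) + Real.sqrt 2
          linarith
      refine ⟨zeta_place RFF (embH a (rk k) (hk k)), ?_, ?_⟩
      · have := xi_xvar a (rk k) (hk k) hpos 0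
        simpa [ha] using this
      · have := xi_xvar a (rk k) (hk k) hpos 1
        simpa [ha] using this


end
end

section
/- Let $R$ be a real closed field and let $C_1, C_2$ be cuts in $R$. Suppose the orderings $\chi(C_1), \chi(C_2)$ of $R(y)$ (where $\chi(C)$ for $C=(D,E)$ is the unique ordering in which $y - d > 0$ for $d \in D$ and $y - e < 0$ for $e \in E$) induce $\R$-places $\lambda(\chi(C_1)), \lambda(\chi(C_2))$. Then $\lambda(\chi(C_1)) = \lambda(\chi(C_2))$ with $C_1 \ne C_2$ implies that $\{C_1, C_2\} = \{B^-, B^+\}$ for a uniquely determined ball $B$ in $R$; in particular, for every $\zeta \in M(R(y))$ the fiber $\lambda^{-1}(\zeta)$ contains at most two orderings. -/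
open Set

open scoped Classical

/-- A (strict) ordering of the field `L`, given by its positive cone `P`. -/
def IsOrdering {L : Type*} [Field L] (P : Set L) : Prop :=
  (∀ x ∈ P, ∀ y ∈ P, x + y ∈ P) ∧ (∀ x ∈ P, ∀ y ∈ P, x * y ∈ P) ∧
  (0 : L) ∉ P ∧ ∀ x : L, x ≠ 0 → (x ∈ P ↔ -x ∉ P)

/-- The `ℝ`-place `λ(P)` associated with the ordering `P` of `L`: an element bounded by
natural numbers on both sides is sent to the supremum of the rationals below it (its
standard part), and unbounded elements are sent to `∞`. -/
noncomputable def assocPlace {L : Type*} [Field L] (P : Set L) : L → WithTop ℝ :=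
  fun x =>
    if (∃ n : ℕ, ((n : L) - x) ∈ P ∧ (x + (n : L)) ∈ P) then
      ((sSup {r : ℝ | ∃ q : ℚ, r = (q : ℝ) ∧ x - (q : L) ∈ P} : ℝ) : WithTop ℝ)
    else ⊤


section Helpers
variable {R : Type*} [Field R] [LinearOrder R] [IsStrictOrderedRing R]

instance : CharZero (RatFunc R) :=
  (RingHom.charZero_iff (RatFunc.algebraMap_injective R)).mp inferInstance

lemma mem_of_not_mem {P : Set (RatFunc R)} (hP : IsOrdering P) {x : RatFunc R}
    (hx : x ≠ 0) (h : x ∉ P) : -x ∈ P := by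
  by_contra hn
  exact h ((hP.2.2.2 x hx).mpr hn)

lemma pos_mem (hsq : ∀ x : R, 0 ≤ x → ∃ y : R, y * y = x)
    {P : Set (RatFunc R)} (hP : IsOrdering P) {r : R} (hr : 0 < r) :
    RatFunc.C r ∈ P := by
  obtain ⟨s, hs⟩ := hsq r hr.le
  have hs0 : s ≠ 0 := by rintro rfl; simp at hs; exact hr.ne' hs.symm
  have hC : RatFunc.C s ≠ 0 := (map_ne_zero RatFunc.C).mpr hs0
  have : RatFunc.C r = RatFunc.C s * RatFunc.C s := by rw [← map_mul, hs]
  rw [this]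
  rcases Classical.em (RatFunc.C s ∈ P) with h | h
  · exact hP.2.1 _ h _ h
  · have := mem_of_not_mem hP hC h
    have := hP.2.1 _ this _ this
    simpa using this

lemma rat_mem (hsq : ∀ x : R, 0 ≤ x → ∃ y : R, y * y = x)
    {P : Set (RatFunc R)} (hP : IsOrdering P) {q : ℚ} (hq : 0 < q) :
    ((q : RatFunc R)) ∈ P := by
  rw [show ((q:RatFunc R)) = RatFunc.C (q:R) from (map_ratCast (RatFunc.C (K:=R)) q).symm]
  exact pos_mem hsq hP (by exact_mod_cast hq)

/-- Core contradiction: f is in [1,2] under Q but negative under P, yet places agree. -/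
lemma core (hsq : ∀ x : R, 0 ≤ x → ∃ y : R, y * y = x)
    {P Q : Set (RatFunc R)} (hP : IsOrdering P) (hQ : IsOrdering Q)
    (heq : assocPlace P = assocPlace Q) {f : RatFunc R}
    (h1 : f - 1 ∈ Q) (h2 : 2 - f ∈ Q) (h3 : -f ∈ P) : False := by
  have hval := congrFun heq f
  have hQb : ∃ n : ℕ, ((n : RatFunc R) - f) ∈ Q ∧ (f + (n : RatFunc R)) ∈ Q := by
    refine ⟨2, by exact_mod_cast h2, ?_⟩
    have h3' : (3 : RatFunc R) ∈ Q := by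
      have := rat_mem hsq hQ (q := 3) (by norm_num)
      exact_mod_cast this
    have := hQ.1 _ h1 _ h3'
    have e : f - 1 + 3 = f + ((2:ℕ) : RatFunc R) := by push_cast; ring
    rwa [e] at this
  set TQ := {r : ℝ | ∃ q : ℚ, r = (q : ℝ) ∧ f - (q : RatFunc R) ∈ Q} with hTQ
  have hmem : (1/2 : ℝ) ∈ TQ := by
    refine ⟨1/2, by norm_num, ?_⟩
    have hh : ((1/2 : ℚ) : RatFunc R) ∈ Q := rat_mem hsq hQ (by norm_num)
    have := hQ.1 _ h1 _ hh
    have e : f - 1 + ((1/2:ℚ):RatFunc R) = f - ((1/2:ℚ):RatFunc R) := by push_cast; ring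
    rwa [e] at this
  have hbdd : ∀ r ∈ TQ, r ≤ 2 := by
    rintro r ⟨q, rfl, hfq⟩
    by_contra hq2
    push_neg at hq2
    have hq2' : (2:ℚ) < q := by exact_mod_cast hq2
    have hsum := hQ.1 _ hfq _ h2
    have e : f - (q : RatFunc R) + (2 - f) = ((2 - q : ℚ) : RatFunc R) := by push_cast; ring
    rw [e] at hsum
    have hpos : ((q - 2 : ℚ) : RatFunc R) ∈ Q := rat_mem hsq hQ (by linarith)
    have := hQ.1 _ hsum _ hpos
    have e2 : ((2 - q : ℚ) : RatFunc R) + ((q - 2 : ℚ) : RatFunc R) = 0 := by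
      push_cast; ring
    rw [e2] at this
    exact hQ.2.2.1 this
  have hsupQ : (1/2 : ℝ) ≤ sSup TQ := le_csSup ⟨2, fun r hr => hbdd r hr⟩ hmem
  have hPle : ∀ r ∈ {r : ℝ | ∃ q : ℚ, r = (q : ℝ) ∧ f - (q : RatFunc R) ∈ P}, r ≤ 0 := by
    rintro r ⟨q, rfl, hfq⟩
    by_contra hq0
    push_neg at hq0
    have hq0' : (0:ℚ) < q := by exact_mod_cast hq0
    have hsum := hP.1 _ hfq _ h3
    have e : f - (q : RatFunc R) + -f = -((q : ℚ) : RatFunc R) := by push_cast; ring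
    rw [e] at hsum
    have := hP.1 _ hsum _ (rat_mem hsq hP hq0')
    simp at this
    exact hP.2.2.1 this
  rw [assocPlace, assocPlace, if_pos hQb] at hval
  split_ifs at hval with hPb
  · have := WithTop.coe_injective hval
    have hsupP : sSup {r : ℝ | ∃ q : ℚ, r = (q : ℝ) ∧ f - (q : RatFunc R) ∈ P} ≤ 0 :=
      Real.sSup_le hPle le_rfl
    rw [this] at hsupP
    linarith
  · exact (WithTop.coe_ne_top (a := sSup TQ)) hval.symm

lemma X_sub_C_ne_zero (d : R) : RatFunc.X - RatFunc.C d ≠ (0 : RatFunc R) := by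
  intro h
  have h1 := sub_eq_zero.mp h
  have h2 : (RatFunc.X : RatFunc R).num = (RatFunc.C d).num := by rw [h1]
  simp [RatFunc.num_X, RatFunc.num_C] at h2
  exact Polynomial.X_ne_C d h2

lemma C_sub_X_mem {P : Set (RatFunc R)} (hP : IsOrdering P) {D : LowerSet R}
    (hc : ∀ d : R, (RatFunc.X - RatFunc.C d) ∈ P ↔ d ∈ D) {d : R} (hd : d ∉ D) :
    RatFunc.C d - RatFunc.X ∈ P := by
  have := mem_of_not_mem hP (X_sub_C_ne_zero d) (fun h => hd ((hc d).mp h))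
  rwa [neg_sub] at this

/-- Key reflection lemma: the "gap" between two cuts with the same place is
closed under point reflections. -/
lemma reflect (hsq : ∀ x : R, 0 ≤ x → ∃ y : R, y * y = x)
    {P Q : Set (RatFunc R)} (hP : IsOrdering P) (hQ : IsOrdering Q)
    {D D' : LowerSet R}
    (hcP : ∀ d : R, (RatFunc.X - RatFunc.C d) ∈ P ↔ d ∈ D)
    (hcQ : ∀ d : R, (RatFunc.X - RatFunc.C d) ∈ Q ↔ d ∈ D')
    (heq : assocPlace P = assocPlace Q) {a b : R}
    (ha : a ∈ D' ∧ a ∉ D) (hb : b ∈ D' ∧ b ∉ D) :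
    2 * b - a ∈ D' ∧ 2 * b - a ∉ D := by
  rcases lt_trichotomy a b with hab | rfl | hab
  · set t := b - a with htdef
    have ht : 0 < t := sub_pos.mpr hab
    have hCt : RatFunc.C t ≠ 0 := (map_ne_zero RatFunc.C).mpr ht.ne'
    have hnotD : 2 * b - a ∉ D := fun h => hb.2 (D.lower (by linarith) h)
    refine ⟨?_, hnotD⟩
    by_contra hc
    set f : RatFunc R := (RatFunc.X - RatFunc.C a) * (RatFunc.C t)⁻¹ with hfdef
    have hinvP : (RatFunc.C t)⁻¹ ∈ P := by
      rw [← map_inv₀]; exact pos_mem hsq hP (inv_pos.mpr ht)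
    have hinvQ : (RatFunc.C t)⁻¹ ∈ Q := by
      rw [← map_inv₀]; exact pos_mem hsq hQ (inv_pos.mpr ht)
    have key : RatFunc.C b = RatFunc.C a + RatFunc.C t := by
      rw [← map_add]; congr 1; rw [htdef]; ring
    have key2 : RatFunc.C (2*b - a) = RatFunc.C a + 2 * RatFunc.C t := by
      rw [show RatFunc.C a + 2 * RatFunc.C t
            = RatFunc.C a + (RatFunc.C t + RatFunc.C t) by ring,
        ← map_add, ← map_add]
      congr 1; rw [htdef]; ring
    refine core hsq hP hQ heq (f := f) ?_ ?_ ?_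
    · have e : f - 1 = (RatFunc.X - RatFunc.C b) * (RatFunc.C t)⁻¹ := by
        rw [hfdef, key]; linear_combination mul_inv_cancel₀ hCt
      rw [e]
      exact hQ.2.1 _ ((hcQ b).mpr hb.1) _ hinvQ
    · have e : 2 - f = (RatFunc.C (2*b - a) - RatFunc.X) * (RatFunc.C t)⁻¹ := by
        rw [hfdef, key2]; linear_combination (-2) * mul_inv_cancel₀ hCt
      rw [e]
      exact hQ.2.1 _ (C_sub_X_mem hQ hcQ hc) _ hinvQ
    · have e : -f = (RatFunc.C a - RatFunc.X) * (RatFunc.C t)⁻¹ := by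
        rw [hfdef]; ring
      rw [e]
      exact hP.2.1 _ (C_sub_X_mem hP hcP ha.2) _ hinvP
  · have e : 2*a - a = a := by ring
    rw [e]; exact hb
  · set s := a - b with hsdef
    have hs : 0 < s := sub_pos.mpr hab
    have hCs : RatFunc.C s ≠ 0 := (map_ne_zero RatFunc.C).mpr hs.ne'
    have hinD' : 2 * b - a ∈ D' := D'.lower (by linarith) hb.1
    refine ⟨hinD', ?_⟩
    intro hc
    set f : RatFunc R := (RatFunc.C a - RatFunc.X) * (RatFunc.C s)⁻¹ with hfdef
    have hinvP : (RatFunc.C s)⁻¹ ∈ P := by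
      rw [← map_inv₀]; exact pos_mem hsq hP (inv_pos.mpr hs)
    have hinvQ : (RatFunc.C s)⁻¹ ∈ Q := by
      rw [← map_inv₀]; exact pos_mem hsq hQ (inv_pos.mpr hs)
    have key : RatFunc.C b = RatFunc.C a - RatFunc.C s := by
      rw [← map_sub]; congr 1; rw [hsdef]; ring
    have key2 : RatFunc.C (2*b - a) = RatFunc.C a - 2 * RatFunc.C s := by
      rw [show RatFunc.C a - 2 * RatFunc.C s
            = RatFunc.C a - (RatFunc.C s + RatFunc.C s) by ring,
        ← map_add, ← map_sub]
      congr 1; rw [hsdef]; ring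
    refine core hsq hQ hP heq.symm (f := f) ?_ ?_ ?_
    · have e : f - 1 = (RatFunc.C b - RatFunc.X) * (RatFunc.C s)⁻¹ := by
        rw [hfdef, key]; linear_combination mul_inv_cancel₀ hCs
      rw [e]
      exact hP.2.1 _ (C_sub_X_mem hP hcP hb.2) _ hinvP
    · have e : 2 - f = (RatFunc.X - RatFunc.C (2*b - a)) * (RatFunc.C s)⁻¹ := by
        rw [hfdef, key2]; linear_combination (-2) * mul_inv_cancel₀ hCs
      rw [e]
      exact hP.2.1 _ ((hcP _).mpr hc) _ hinvP
    · have e : -f = (RatFunc.X - RatFunc.C a) * (RatFunc.C s)⁻¹ := by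
        rw [hfdef]; ring
      rw [e]
      exact hQ.2.1 _ ((hcQ a).mpr ha.1) _ hinvQ

/-- A reflection-closed set contains all points `a + n*(b-a)` for `a, b` in it. -/
lemma refl_multiples {B : Set R} (hrefl : ∀ a ∈ B, ∀ b ∈ B, 2*b - a ∈ B)
    {a b : R} (ha : a ∈ B) (hb : b ∈ B) (n : ℕ) : a + (n : R) * (b - a) ∈ B := by
  have key : ∀ m : ℕ, a + (m : R) * (b - a) ∈ B ∧ a + ((m:R) + 1) * (b - a) ∈ B := by
    intro m
    induction m with
    | zero => exact ⟨by simpa using ha, by simpa using hb⟩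
    | succ k ih =>
      refine ⟨by push_cast; simpa using ih.2, ?_⟩
      have := hrefl _ ih.1 _ ih.2
      have e : 2 * (a + ((k:R) + 1) * (b - a)) - (a + (k:R) * (b - a))
          = a + ((((k:ℕ)+1:ℕ):R) + 1) * (b - a) := by push_cast; ring
      rwa [e] at this
  exact (key n).1

/-- A nonempty, order-convex, reflection-closed set is a ball. -/
lemma isBall_of_refl {B : Set R} (hne : B.Nonempty)
    (hrefl : ∀ a ∈ B, ∀ b ∈ B, 2*b - a ∈ B)
    (hconv : ∀ x ∈ B, ∀ z ∈ B, ∀ y, x ≤ y → y ≤ z → y ∈ B) : IsBall B := by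
  obtain ⟨a, ha⟩ := hne
  refine ⟨a, {u | a + u ∈ B ∧ a - u ∈ B},
    ⟨⟨by simpa using ha, by simpa using ha⟩, ?_⟩, ?_⟩
  · intro u hu w hvw
    obtain ⟨hu1, hu2⟩ := hu
    have hw0 : ∃ n : ℕ, |w| ≤ (n : R) * |u| := hvw
    obtain ⟨n, hw⟩ := hw0
    have habs1 : a + |u| ∈ B := by
      rcases abs_cases u with ⟨h, _⟩ | ⟨h, _⟩
      · rw [h]; exact hu1
      · rw [h, ← sub_eq_add_neg]; exact hu2
    have habs2 : a - |u| ∈ B := by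
      rcases abs_cases u with ⟨h, _⟩ | ⟨h, _⟩
      · rw [h]; exact hu2
      · rw [h, sub_neg_eq_add]; exact hu1
    have hup : a + (n : R) * |u| ∈ B := by
      have := refl_multiples hrefl ha habs1 n
      simpa using this
    have hdn : a - (n : R) * |u| ∈ B := by
      have := refl_multiples hrefl ha habs2 n
      have e : a + (n:R) * (a - |u| - a) = a - (n:R) * |u| := by ring
      rwa [e] at this
    have hw' := abs_le.mp hw
    constructor
    · exact hconv _ hdn _ hup (a + w) (by linarith [hw'.1]) (by linarith [hw'.2])
    · exact hconv _ hdn _ hup (a - w) (by linarith [hw'.2]) (by linarith [hw'.1])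
  · ext x
    constructor
    · intro hx
      have h2 : 2 * a - x ∈ B := hrefl _ hx _ ha
      show a + (a - x) ∈ B ∧ a - (a - x) ∈ B
      exact ⟨by rw [show a + (a - x) = 2*a - x by ring]; exact h2, by simpa using hx⟩
    · intro hx
      have hx' : a + (a - x) ∈ B ∧ a - (a - x) ∈ B := hx
      simpa using hx'.2

lemma isBall_nonempty {B : Set R} (h : IsBall B) : B.Nonempty := by
  obtain ⟨a, S, hS, rfl⟩ := h
  exact ⟨a, show a - a ∈ S by simpa using hS.1⟩

lemma isBall_convex {B : Set R} (h : IsBall B) :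
    ∀ x ∈ B, ∀ z ∈ B, ∀ y, x ≤ y → y ≤ z → y ∈ B := by
  obtain ⟨a, S, hS, rfl⟩ := h
  intro x hx z hz y hxy hyz
  have hx' : a - x ∈ S := hx
  have hz' : a - z ∈ S := hz
  show a - y ∈ S
  rcases le_total |a - x| |a - z| with hle | hle
  · refine hS.2 _ hz' _ ⟨1, ?_⟩
    rw [Nat.cast_one, one_mul]
    refine abs_le.mpr ⟨by linarith [neg_abs_le (a - z)], ?_⟩
    have := le_abs_self (a - x)
    linarith
  · refine hS.2 _ hx' _ ⟨1, ?_⟩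
    rw [Nat.cast_one, one_mul]
    refine abs_le.mpr ⟨by linarith [neg_abs_le (a - z)], ?_⟩
    have := le_abs_self (a - x)
    linarith

lemma exists_mem_gap {C C' : LowerSet R} (h : C < C') : ∃ a, a ∈ C' ∧ a ∉ C := by
  have hnle : ¬ (C' ≤ C) := not_le_of_gt h
  have : ¬ ((C' : Set R) ⊆ (C : Set R)) := fun hs => hnle (LowerSet.coe_subset_coe.mp hs)
  obtain ⟨a, ha, hna⟩ := Set.not_subset.mp this
  exact ⟨a, ha, hna⟩

lemma gap_lowerEdge {C C' : LowerSet R} (h : C < C') :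
    C = lowerEdge ((C' : Set R) \ (C : Set R)) := by
  obtain ⟨b0, hb0⟩ := exists_mem_gap h
  apply SetLike.ext
  intro x
  constructor
  · intro hx
    intro c hc
    by_contra hlt
    exact hc.2 (C.lower (le_of_not_gt hlt) hx)
  · intro hx
    have hxb : x < b0 := hx b0 ⟨hb0.1, hb0.2⟩
    have hxC' : x ∈ C' := C'.lower hxb.le hb0.1
    by_contra hxC
    exact absurd (hx x ⟨hxC', hxC⟩) (lt_irrefl x)
  

lemma gap_upperEdge {C C' : LowerSet R} (h : C < C') :
    C' = upperEdge ((C' : Set R) \ (C : Set R)) := by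
  obtain ⟨b0, hb0⟩ := exists_mem_gap h
  apply SetLike.ext
  intro x
  constructor
  · intro hx
    by_cases hxC : x ∈ C
    · refine ⟨b0, ⟨hb0.1, hb0.2⟩, ?_⟩
      by_contra hlt
      exact hb0.2 (C.lower (le_of_not_ge hlt) hxC)
    · exact ⟨x, ⟨hx, hxC⟩, le_rfl⟩
  · rintro ⟨c, hc, hxc⟩
    exact C'.lower hxc hc.1

/-- A nonempty order-convex set equals the set between its edges. -/
lemma convex_eq_gap {B : Set R} (hne : B.Nonempty)
    (hconv : ∀ x ∈ B, ∀ z ∈ B, ∀ y, x ≤ y → y ≤ z → y ∈ B)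
    {Cl Cu : LowerSet R} (hl : Cl = lowerEdge B) (hu : Cu = upperEdge B) :
    B = (Cu : Set R) \ (Cl : Set R) := by
  have hlc : (Cl : Set R) = {x | ∀ a ∈ B, x < a} := by rw [hl]; rfl
  have huc : (Cu : Set R) = {x | ∃ a ∈ B, x ≤ a} := by rw [hu]; rfl
  ext x
  rw [Set.mem_diff, hlc, huc]
  simp only [Set.mem_setOf_eq]
  constructor
  · intro hx
    exact ⟨⟨x, hx, le_rfl⟩, fun h => absurd (h x hx) (lt_irrefl x)⟩
  · rintro ⟨⟨c, hc, hxc⟩, hnl⟩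
    push_neg at hnl
    obtain ⟨b, hb, hbx⟩ := hnl
    exact hconv b hb c hc x hbx hxc

end Helpers


lemma aux_main {R : Type*} [Field R] [LinearOrder R] [IsStrictOrderedRing R]
    (hsq : ∀ x : R, 0 ≤ x → ∃ y : R, y * y = x)
    (C1 C2 : LowerSet R) (P1 P2 : Set (RatFunc R))
    (hP1 : IsOrdering P1) (hP2 : IsOrdering P2)
    (hc1 : ∀ d : R, (RatFunc.X - RatFunc.C d) ∈ P1 ↔ d ∈ C1)
    (hc2 : ∀ d : R, (RatFunc.X - RatFunc.C d) ∈ P2 ↔ d ∈ C2)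
    (hlt : C1 < C2) (heq : assocPlace P1 = assocPlace P2) :
    (∃! B : Set R, IsBall B ∧
      ((C1 = lowerEdge B ∧ C2 = upperEdge B) ∨ (C2 = lowerEdge B ∧ C1 = upperEdge B))) ∧
    ∀ (P3 : Set (RatFunc R)) (C3 : LowerSet R), IsOrdering P3 →
      (∀ d : R, (RatFunc.X - RatFunc.C d) ∈ P3 ↔ d ∈ C3) →
      assocPlace P3 = assocPlace P1 → C3 = C1 ∨ C3 = C2 := by
  set B : Set R := (C2 : Set R) \ (C1 : Set R) with hBdef
  have hmemB : ∀ {x : R}, x ∈ B ↔ (x ∈ C2 ∧ x ∉ C1) := by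
    intro x; rw [hBdef]; exact Iff.rfl
  have hsub12 : ∀ {x : R}, x ∈ C1 → x ∈ C2 :=
    fun hx => (LowerSet.coe_subset_coe.mpr hlt.le) hx
  have hrefl : ∀ a ∈ B, ∀ b ∈ B, 2*b - a ∈ B := by
    intro a haB b hbB
    have := reflect hsq hP1 hP2 hc1 hc2 heq
      ⟨(hmemB.mp haB).1, (hmemB.mp haB).2⟩ ⟨(hmemB.mp hbB).1, (hmemB.mp hbB).2⟩
    exact hmemB.mpr this
  have hconv : ∀ x ∈ B, ∀ z ∈ B, ∀ y, x ≤ y → y ≤ z → y ∈ B := by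
    intro x hx z hz y hxy hyz
    exact hmemB.mpr ⟨C2.lower hyz (hmemB.mp hz).1,
      fun h => (hmemB.mp hx).2 (C1.lower hxy h)⟩
  have hne : B.Nonempty := by
    obtain ⟨a, ha⟩ := exists_mem_gap hlt
    exact ⟨a, hmemB.mpr ha⟩
  have hball : IsBall B := isBall_of_refl hne hrefl hconv
  constructor
  · refine ⟨B, ⟨hball, Or.inl ⟨gap_lowerEdge hlt, gap_upperEdge hlt⟩⟩, ?_⟩
    rintro B' ⟨hB', hcase⟩
    rcases hcase with ⟨h1, h2⟩ | ⟨h1, h2⟩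
    · exact convex_eq_gap (isBall_nonempty hB') (isBall_convex hB') h1 h2
    · exfalso
      obtain ⟨c, hc⟩ := isBall_nonempty hB'
      have hle : C2 ≤ C1 := by
        rw [h1, h2]
        refine LowerSet.coe_subset_coe.mp ?_
        intro x hx
        exact ⟨c, hc, (hx c hc).le⟩
      exact absurd hle (not_le_of_gt hlt)
  · intro P3 C3 hP3 hc3 h31
    by_contra hcon
    push_neg at hcon
    obtain ⟨hn1, hn2⟩ := hcon
    rcases lt_trichotomy C3 C1 with hA | hE | hA
    · -- C3 < C1 < C2
      obtain ⟨a, ha1, ha3⟩ := exists_mem_gap hA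
      obtain ⟨b, hb2, hb1⟩ := exists_mem_gap hlt
      have ha2 : a ∈ C2 := hsub12 ha1
      have hsub31 : ∀ {x : R}, x ∈ C3 → x ∈ C1 :=
        fun hx => (LowerSet.coe_subset_coe.mpr hA.le) hx
      have hb3 : b ∉ C3 := fun h => hb1 (hsub31 h)
      have hab : a < b := lt_of_not_ge fun h => hb1 (C1.lower h ha1)
      have r1 := reflect hsq hP3 hP2 hc3 hc2 (h31.trans heq)
        (a := b) (b := a) ⟨hb2, hb3⟩ ⟨ha2, ha3⟩
      have hin1 : 2*a - b ∈ C1 := C1.lower (by linarith) ha1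
      have r2 := reflect hsq hP3 hP1 hc3 hc1 h31
        (a := 2*a - b) (b := a) ⟨hin1, r1.2⟩ ⟨ha1, ha3⟩
      have hb1' : b ∈ C1 := by
        have := r2.1
        rwa [show 2*a - (2*a - b) = b by ring] at this
      exact hb1 hb1'
    · exact hn1 hE
    · rcases lt_trichotomy C3 C2 with hB | hE | hC
      · -- C1 < C3 < C2
        obtain ⟨a, ha3, ha1⟩ := exists_mem_gap hA
        obtain ⟨b, hb2, hb3⟩ := exists_mem_gap hB
        have hsub32 : ∀ {x : R}, x ∈ C3 → x ∈ C2 :=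
          fun hx => (LowerSet.coe_subset_coe.mpr hB.le) hx
        have ha2 : a ∈ C2 := hsub32 ha3
        have hb1 : b ∉ C1 := fun h => hb3 ((LowerSet.coe_subset_coe.mpr hA.le) h)
        have hab : a < b := lt_of_not_ge fun h => hb3 (C3.lower h ha3)
        have r1 := reflect hsq hP1 hP2 hc1 hc2 heq
          (a := b) (b := a) ⟨hb2, hb1⟩ ⟨ha2, ha1⟩
        have hin3 : 2*a - b ∈ C3 := C3.lower (by linarith) ha3
        have r2 := reflect hsq hP1 hP3 hc1 hc3 h31.symm
          (a := 2*a - b) (b := a) ⟨hin3, r1.2⟩ ⟨ha3, ha1⟩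
        have : b ∈ C3 := by
          have := r2.1
          rwa [show 2*a - (2*a - b) = b by ring] at this
        exact hb3 this
      · exact hn2 hE
      · -- C1 < C2 < C3
        obtain ⟨a, ha2, ha1⟩ := exists_mem_gap hlt
        obtain ⟨b, hb3, hb2⟩ := exists_mem_gap hC
        have ha3 : a ∈ C3 := (LowerSet.coe_subset_coe.mpr hC.le) ha2
        have hb1 : b ∉ C1 := fun h => hb2 (hsub12 h)
        have hab : a < b := lt_of_not_ge fun h => hb2 (C2.lower h ha2)
        have r1 := reflect hsq hP1 hP3 hc1 hc3 h31.symm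
          (a := a) (b := b) ⟨ha3, ha1⟩ ⟨hb3, hb1⟩
        have hnot2 : 2*b - a ∉ C2 := fun h => hb2 (C2.lower (by linarith) h)
        have r2 := reflect hsq hP2 hP3 hc2 hc3 ((h31.trans heq).symm)
          (a := 2*b - a) (b := b) ⟨r1.1, hnot2⟩ ⟨hb3, hb2⟩
        have : a ∈ C3 ∧ a ∉ C2 := by
          have := r2
          rwa [show 2*b - (2*b - a) = a by ring] at this
        exact this.2 ha2

/-- let `R` be a real closed field and `C₁ ≠ C₂` cuts in `R` whose associated
orderings `χ(C₁), χ(C₂)` of `R(y)` (characterized by `y - d > 0 ↔ d` in the left part of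
the cut) induce the same `ℝ`-place.  Then `{C₁, C₂} = {B⁻, B⁺}` for a uniquely determined
ball `B` in `R`; and in particular any ordering of `R(y)` inducing this same `ℝ`-place has
cut `C₁` or `C₂`, so each fiber of `λ` contains at most two orderings. -/
theorem glued_cuts_are_ball_edges {R : Type*} [Field R] [LinearOrder R] [IsStrictOrderedRing R]
    (hsq : ∀ x : R, 0 ≤ x → ∃ y : R, y * y = x)
    (hodd : ∀ p : Polynomial R, Odd p.natDegree → ∃ x : R, p.IsRoot x)
    (C1 C2 : LowerSet R) (P1 P2 : Set (RatFunc R))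
    (hP1 : IsOrdering P1) (hP2 : IsOrdering P2)
    (hc1 : ∀ d : R, (RatFunc.X - RatFunc.C d) ∈ P1 ↔ d ∈ C1)
    (hc2 : ∀ d : R, (RatFunc.X - RatFunc.C d) ∈ P2 ↔ d ∈ C2)
    (hne : C1 ≠ C2) (heq : assocPlace P1 = assocPlace P2) :
    (∃! B : Set R, IsBall B ∧
      ((C1 = lowerEdge B ∧ C2 = upperEdge B) ∨ (C2 = lowerEdge B ∧ C1 = upperEdge B))) ∧
    ∀ (P3 : Set (RatFunc R)) (C3 : LowerSet R), IsOrdering P3 →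
      (∀ d : R, (RatFunc.X - RatFunc.C d) ∈ P3 ↔ d ∈ C3) →
      assocPlace P3 = assocPlace P1 → C3 = C1 ∨ C3 = C2 := by
  rcases lt_trichotomy C1 C2 with hlt | hE | hlt
  · exact aux_main hsq C1 C2 P1 P2 hP1 hP2 hc1 hc2 hlt heq
  · exact absurd hE hne
  · obtain ⟨h1, h2⟩ := aux_main hsq C2 C1 P2 P1 hP2 hP1 hc2 hc1 hlt heq.symm
    constructor
    · obtain ⟨B, ⟨hb, hcase⟩, hu⟩ := h1
      exact ⟨B, ⟨hb, hcase.symm⟩, fun y hy => hu y ⟨hy.1, hy.2.symm⟩⟩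
    · intro P3 C3 hP3 hc3 h31
      exact (h2 P3 C3 hP3 hc3 (h31.trans heq)).symm
end
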